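/- arXiv:math/0401311 — 4 statements merged into one kernel-verified Lean document; each statement's English description precedes it below -/
import Mathlib

section
/- The closure of Δ₀ \ (Δ₁ ∪ Δ₂) equals the union of the good simplices convexHull(S) taken over all good sets S other than A ∪ B and B ∪ C. (These 3^k − 3 simplices partition the modular block Ω.) -/
noncomputable section

/-- The ambient space `ℝ^{2k}`, written as pairs `(x, y)` with `x, y ∈ ℝ^k`. -/
abbrev V (k : ℕ) := (Fin k ⊕ Fin k) → ℝ

/-- `A_j = (e_j, 0)`. -/
def vA (k : ℕ) (j : Fin k) : V k
  | .inl i => if i = j then 1 else 0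
  | .inr _ => 0

/-- `B_j = (1/(2n)) · (2·𝟙 − e_j, 2·𝟙 − e_j)` with `n = 2k − 1`. -/
def vB (k : ℕ) (j : Fin k) : V k
  | .inl i => (2 - if i = j then 1 else 0) / (2 * (2 * (k : ℝ) - 1))
  | .inr i => (2 - if i = j then 1 else 0) / (2 * (2 * (k : ℝ) - 1))

/-- `C_j = (0, e_j)`. -/
def vC (k : ℕ) (j : Fin k) : V k
  | .inl _ => 0
  | .inr i => if i = j then 1 else 0

def setA (k : ℕ) : Set (V k) := Set.range (vA k)
def setB (k : ℕ) : Set (V k) := Set.range (vB k)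
def setC (k : ℕ) : Set (V k) := Set.range (vC k)
def setX (k : ℕ) : Set (V k) := setA k ∪ setB k ∪ setC k

/-- A subset `S ⊆ X` is good if it has exactly `2k` elements, contains no full
triple `{A_j, B_j, C_j}`, and `S ≠ A ∪ C`. -/
def IsGood (k : ℕ) (S : Set (V k)) : Prop :=
  S ⊆ setX k ∧ S.ncard = 2 * k ∧
  (∀ j : Fin k, ¬ (({vA k j, vB k j, vC k j} : Set (V k)) ⊆ S)) ∧
  S ≠ setA k ∪ setC k

def Delta0 (k : ℕ) : Set (V k) := convexHull ℝ (setA k ∪ setC k)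
def Delta1 (k : ℕ) : Set (V k) := convexHull ℝ (setA k ∪ setB k)
def Delta2 (k : ℕ) : Set (V k) := convexHull ℝ (setB k ∪ setC k)

/-- The modular block `Ω = closure(Δ₀ \ (Δ₁ ∪ Δ₂))`. -/
def OmegaB (k : ℕ) : Set (V k) := closure (Delta0 k \ (Delta1 k ∪ Delta2 k))

namespace Stmt11

variable {k : ℕ}

lemma nn_pos (hk : 2 ≤ k) : (0:ℝ) < 2 * (k:ℝ) - 1 := by
  have : (2:ℝ) ≤ (k:ℝ) := by exact_mod_cast hk
  linarith

lemma DD_pos (hk : 2 ≤ k) : (0:ℝ) < 2 * (2 * (k:ℝ) - 1) := by linarith [nn_pos hk]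

lemma vB_pos (hk : 2 ≤ k) (j : Fin k) (i : Fin k ⊕ Fin k) : 0 < vB k j i := by
  have hD := DD_pos hk
  cases i with
  | inl i =>
    show 0 < (2 - if i = j then 1 else 0) / (2 * (2 * (k : ℝ) - 1))
    apply div_pos _ hD; split <;> norm_num
  | inr i =>
    show 0 < (2 - if i = j then 1 else 0) / (2 * (2 * (k : ℝ) - 1))
    apply div_pos _ hD; split <;> norm_num

lemma vA_ne_vB (hk : 2 ≤ k) (j j' : Fin k) : vA k j ≠ vB k j' := by
  intro h
  have := congrFun h (Sum.inr j)
  simp only [vA] at this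
  exact absurd this.symm (ne_of_gt (vB_pos hk j' (Sum.inr j)))

lemma vC_ne_vB (hk : 2 ≤ k) (j j' : Fin k) : vC k j ≠ vB k j' := by
  intro h
  have := congrFun h (Sum.inl j)
  simp only [vC] at this
  exact absurd this.symm (ne_of_gt (vB_pos hk j' (Sum.inl j)))

lemma vA_ne_vC (j j' : Fin k) : vA k j ≠ vC k j' := by
  intro h
  have := congrFun h (Sum.inl j)
  simp only [vA, vC, if_pos rfl] at this
  exact one_ne_zero this

lemma vA_inj : Function.Injective (vA k) := by
  intro j j' h
  have := congrFun h (Sum.inl j)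
  simp only [vA, if_pos rfl] at this
  by_contra hne
  rw [if_neg hne] at this
  exact one_ne_zero this

lemma vC_inj : Function.Injective (vC k) := by
  intro j j' h
  have := congrFun h (Sum.inr j)
  simp only [vC, if_pos rfl] at this
  by_contra hne
  rw [if_neg hne] at this
  exact one_ne_zero this

lemma vB_inj (hk : 2 ≤ k) : Function.Injective (vB k) := by
  intro j j' h
  have hD := (DD_pos hk).ne'
  have := congrFun h (Sum.inl j)
  simp only [vB, if_pos rfl] at this
  rw [div_eq_div_iff hD hD] at this
  by_contra hne
  rw [if_neg hne] at this
  have := mul_right_cancel₀ hD this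
  norm_num at this

/-- The combination of weights `a, b, c`. -/
def combo (k : ℕ) (a b c : Fin k → ℝ) : V k :=
  ∑ j, a j • vA k j + ∑ j, b j • vB k j + ∑ j, c j • vC k j

lemma combo_apply_inl (a b c : Fin k → ℝ) (i : Fin k) :
    combo k a b c (Sum.inl i)
      = a i + (2 * (∑ j, b j) - b i) / (2 * (2 * (k:ℝ) - 1)) := by
  simp only [combo, Pi.add_apply, Finset.sum_apply, Pi.smul_apply, vA, vB, vC,
    smul_eq_mul, mul_zero, Finset.sum_const_zero, add_zero, mul_ite, mul_one]
  rw [Fintype.sum_ite_eq i a]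
  congr 1
  have hterm : ∀ x : Fin k, b x * ((2 - if i = x then 1 else 0) / (2 * (2 * (k:ℝ) - 1)))
      = (2 * b x - if i = x then b x else 0) / (2 * (2 * (k:ℝ) - 1)) := by
    intro x; split <;> ring
  simp only [hterm]
  rw [← Finset.sum_div, Finset.sum_sub_distrib, ← Finset.mul_sum, Fintype.sum_ite_eq i b]


lemma combo_apply_inr (a b c : Fin k → ℝ) (i : Fin k) :
    combo k a b c (Sum.inr i)
      = c i + (2 * (∑ j, b j) - b i) / (2 * (2 * (k:ℝ) - 1)) := by
  simp only [combo, Pi.add_apply, Finset.sum_apply, Pi.smul_apply, vA, vB, vC,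
    smul_eq_mul, mul_zero, Finset.sum_const_zero, zero_add, mul_ite, mul_one]
  rw [Fintype.sum_ite_eq i c]
  have hterm : ∀ x : Fin k, b x * ((2 - if i = x then 1 else 0) / (2 * (2 * (k:ℝ) - 1)))
      = (2 * b x - if i = x then b x else 0) / (2 * (2 * (k:ℝ) - 1)) := by
    intro x; split <;> ring
  simp only [hterm]
  rw [← Finset.sum_div, Finset.sum_sub_distrib, ← Finset.mul_sum, Fintype.sum_ite_eq i b]
  exact add_comm _ _

lemma sum_q (hk : 2 ≤ k) (b : Fin k → ℝ) :
    ∑ i : Fin k, (2 * (∑ j, b j) - b i) / (2 * (2 * (k:ℝ) - 1)) = (∑ j, b j) / 2 := by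
  rw [← Finset.sum_div, Finset.sum_sub_distrib, Finset.sum_const, Finset.card_univ,
    Fintype.card_fin, nsmul_eq_mul]
  have hD := (DD_pos hk).ne'
  have hn := (nn_pos hk).ne'
  rw [div_eq_div_iff hD two_ne_zero]
  ring

lemma sum_combo (hk : 2 ≤ k) (a b c : Fin k → ℝ) :
    ∑ i, combo k a b c i = ∑ j, a j + ∑ j, b j + ∑ j, c j := by
  have hD := (DD_pos hk).ne'
  rw [Fintype.sum_sum_type]
  simp only [combo_apply_inl, combo_apply_inr]
  rw [Finset.sum_add_distrib, Finset.sum_add_distrib]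
  rw [sum_q hk b]
  ring

lemma mem_convexHull_of_weights {ι : Type*} [Fintype ι] (pt : ι → V k) (w : ι → ℝ)
    (h0 : ∀ i, 0 ≤ w i) (h1 : ∑ i, w i = 1) :
    ∑ i, w i • pt i ∈ convexHull ℝ (Set.range pt) :=
  (convex_convexHull ℝ _).sum_mem (fun i _ => h0 i) h1
    (fun i _ => subset_convexHull ℝ _ (Set.mem_range_self i))

lemma extract {ι : Type*} [Fintype ι] [DecidableEq ι] {pt : ι → V k}
    (hinj : Function.Injective pt) {x : V k}
    (hx : x ∈ convexHull ℝ (Set.range pt)) :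
    ∃ w : ι → ℝ, (∀ i, 0 ≤ w i) ∧ ∑ i, w i = 1 ∧ x = ∑ i, w i • pt i := by
  classical
  have hfin : (Set.range pt).Finite := Set.finite_range pt
  rw [hfin.convexHull_eq] at hx
  obtain ⟨w', hw0, hw1, hwx⟩ := hx
  have htf : hfin.toFinset = Finset.univ.image pt := by
    ext y; simp
  refine ⟨fun i => w' (pt i), fun i => hw0 _ (Set.mem_range_self i), ?_, ?_⟩
  · rw [← hw1, htf, Finset.sum_image (fun i _ j _ h => hinj h)]
  · rw [← hwx, Finset.centerMass_eq_of_sum_1 _ id hw1, htf,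
      Finset.sum_image (fun i _ j _ h => hinj h)]
    simp


lemma fin3 (t : Fin 3) : t = 0 ∨ t = 1 ∨ t = 2 := by fin_cases t <;> simp

/-- first vertex of column `j` in the cell `σ` -/
def cellFst (k : ℕ) (σ : Fin k → Fin 3) (j : Fin k) : V k :=
  if σ j = 2 then vB k j else vA k j

/-- second vertex of column `j` in the cell `σ` -/
def cellSnd (k : ℕ) (σ : Fin k → Fin 3) (j : Fin k) : V k :=
  if σ j = 1 then vB k j else vC k j

def cellPt (k : ℕ) (σ : Fin k → Fin 3) : Fin k ⊕ Fin k → V k :=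
  Sum.elim (cellFst k σ) (cellSnd k σ)

def cell (k : ℕ) (σ : Fin k → Fin 3) : Set (V k) := Set.range (cellPt k σ)

lemma cellFst_inj (hk : 2 ≤ k) {σ : Fin k → Fin 3} {j j' : Fin k}
    (h : cellFst k σ j = cellFst k σ j') : j = j' := by
  unfold cellFst at h
  split_ifs at h with h1 h2
  · exact vB_inj hk h
  · exact absurd h.symm (vA_ne_vB hk _ _)
  · exact absurd h (vA_ne_vB hk _ _)
  · exact vA_inj h

lemma cellSnd_inj (hk : 2 ≤ k) {σ : Fin k → Fin 3} {j j' : Fin k}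
    (h : cellSnd k σ j = cellSnd k σ j') : j = j' := by
  unfold cellSnd at h
  split_ifs at h with h1 h2
  · exact vB_inj hk h
  · exact absurd h.symm (vC_ne_vB hk _ _)
  · exact absurd h (vC_ne_vB hk _ _)
  · exact vC_inj h

lemma cellFst_ne_cellSnd (hk : 2 ≤ k) {σ : Fin k → Fin 3} {j j' : Fin k} :
    cellFst k σ j ≠ cellSnd k σ j' := by
  unfold cellFst cellSnd
  split_ifs with h1 h2 h2
  · intro h
    have hj := vB_inj hk h
    subst hj
    rw [h2] at h1
    exact absurd h1 (by decide)
  · exact fun h => vC_ne_vB hk _ _ h.symm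
  · exact vA_ne_vB hk _ _
  · exact vA_ne_vC _ _

lemma cellPt_inj (hk : 2 ≤ k) (σ : Fin k → Fin 3) : Function.Injective (cellPt k σ) := by
  intro x y h
  cases x with
  | inl j =>
    cases y with
    | inl j' => exact congrArg Sum.inl (cellFst_inj hk h)
    | inr j' => exact absurd h (cellFst_ne_cellSnd hk)
  | inr j =>
    cases y with
    | inl j' => exact absurd h.symm (cellFst_ne_cellSnd hk)
    | inr j' => exact congrArg Sum.inr (cellSnd_inj hk h)

lemma vA_mem_cell_iff (hk : 2 ≤ k) (σ : Fin k → Fin 3) (j : Fin k) :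
    vA k j ∈ cell k σ ↔ σ j ≠ 2 := by
  constructor
  · rintro ⟨i, hi⟩
    cases i with
    | inl j' =>
      unfold cellPt cellFst at hi
      simp only [Sum.elim_inl] at hi
      split_ifs at hi with h1
      · exact absurd hi.symm (vA_ne_vB hk _ _)
      · rw [vA_inj hi] at h1; exact h1
    | inr j' =>
      unfold cellPt cellSnd at hi
      simp only [Sum.elim_inr] at hi
      split_ifs at hi with h1
      · exact absurd hi.symm (vA_ne_vB hk _ _)
      · exact absurd hi.symm (vA_ne_vC _ _)
  · intro h
    exact ⟨Sum.inl j, by simp [cellPt, cellFst, if_neg h]⟩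

lemma vC_mem_cell_iff (hk : 2 ≤ k) (σ : Fin k → Fin 3) (j : Fin k) :
    vC k j ∈ cell k σ ↔ σ j ≠ 1 := by
  constructor
  · rintro ⟨i, hi⟩
    cases i with
    | inl j' =>
      unfold cellPt cellFst at hi
      simp only [Sum.elim_inl] at hi
      split_ifs at hi with h1
      · exact absurd hi (vC_ne_vB hk _ _).symm
      · exact absurd hi (vA_ne_vC _ _)
    | inr j' =>
      unfold cellPt cellSnd at hi
      simp only [Sum.elim_inr] at hi
      split_ifs at hi with h1
      · exact absurd hi (vC_ne_vB hk _ _).symm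
      · rw [vC_inj hi] at h1; exact h1
  · intro h
    exact ⟨Sum.inr j, by simp [cellPt, cellSnd, if_neg h]⟩

lemma vB_mem_cell_iff (hk : 2 ≤ k) (σ : Fin k → Fin 3) (j : Fin k) :
    vB k j ∈ cell k σ ↔ σ j ≠ 0 := by
  constructor
  · rintro ⟨i, hi⟩
    cases i with
    | inl j' =>
      unfold cellPt cellFst at hi
      simp only [Sum.elim_inl] at hi
      split_ifs at hi with h1
      · rw [← vB_inj hk hi, h1]; decide
      · exact absurd hi (vA_ne_vB hk _ _)
    | inr j' =>
      unfold cellPt cellSnd at hi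
      simp only [Sum.elim_inr] at hi
      split_ifs at hi with h1
      · rw [← vB_inj hk hi, h1]; decide
      · exact absurd hi (vC_ne_vB hk _ _)
  · intro h
    rcases fin3 (σ j) with h0 | h0 | h0
    · exact absurd h0 h
    · exact ⟨Sum.inr j, by simp [cellPt, cellSnd, if_pos h0]⟩
    · exact ⟨Sum.inl j, by simp [cellPt, cellFst, if_pos h0]⟩

lemma cell_zero : cell k (fun _ => (0 : Fin 3)) = setA k ∪ setC k := by
  unfold cell cellPt cellFst cellSnd
  rw [Set.Sum.elim_range]
  rfl

lemma cell_one : cell k (fun _ => (1 : Fin 3)) = setA k ∪ setB k := by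
  unfold cell cellPt cellFst cellSnd
  rw [Set.Sum.elim_range]
  rfl

lemma cell_two : cell k (fun _ => (2 : Fin 3)) = setB k ∪ setC k := by
  unfold cell cellPt cellFst cellSnd
  rw [Set.Sum.elim_range]
  rfl

lemma cell_inj (hk : 2 ≤ k) : Function.Injective (cell k) := by
  intro σ σ' h
  funext j
  have hB : (σ j ≠ 0) ↔ (σ' j ≠ 0) := by
    rw [← vB_mem_cell_iff hk σ j, ← vB_mem_cell_iff hk σ' j, h]
  have hC : (σ j ≠ 1) ↔ (σ' j ≠ 1) := by
    rw [← vC_mem_cell_iff hk σ j, ← vC_mem_cell_iff hk σ' j, h]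
  have hA : (σ j ≠ 2) ↔ (σ' j ≠ 2) := by
    rw [← vA_mem_cell_iff hk σ j, ← vA_mem_cell_iff hk σ' j, h]
  rcases fin3 (σ j) with h0 | h0 | h0 <;> rcases fin3 (σ' j) with h1 | h1 | h1 <;>
    rw [h0, h1] <;> simp [h0, h1] at hA hB hC ⊢


def wOf (k : ℕ) (σ : Fin k → Fin 3) (a b c : Fin k → ℝ) : Fin k ⊕ Fin k → ℝ :=
  Sum.elim (fun j => if σ j = 2 then b j else a j) (fun j => if σ j = 1 then b j else c j)

def aOf (k : ℕ) (σ : Fin k → Fin 3) (w : Fin k ⊕ Fin k → ℝ) : Fin k → ℝ :=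
  fun j => if σ j = 2 then 0 else w (Sum.inl j)

def bOf (k : ℕ) (σ : Fin k → Fin 3) (w : Fin k ⊕ Fin k → ℝ) : Fin k → ℝ :=
  fun j => (if σ j = 2 then w (Sum.inl j) else 0) + (if σ j = 1 then w (Sum.inr j) else 0)

def cOf (k : ℕ) (σ : Fin k → Fin 3) (w : Fin k ⊕ Fin k → ℝ) : Fin k → ℝ :=
  fun j => if σ j = 1 then 0 else w (Sum.inr j)

lemma sum_w_eq (σ : Fin k → Fin 3) (w : Fin k ⊕ Fin k → ℝ) :
    ∑ i, w i • cellPt k σ i = combo k (aOf k σ w) (bOf k σ w) (cOf k σ w) := by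
  rw [Fintype.sum_sum_type, combo, ← Finset.sum_add_distrib, ← Finset.sum_add_distrib,
    ← Finset.sum_add_distrib]
  refine Finset.sum_congr rfl fun j _ => ?_
  rcases fin3 (σ j) with h | h | h <;>
    simp [cellPt, cellFst, cellSnd, aOf, bOf, cOf, h, add_smul, zero_smul] <;> abel

lemma sum_w_weights (σ : Fin k → Fin 3) (w : Fin k ⊕ Fin k → ℝ) :
    ∑ i, w i = ∑ j, aOf k σ w j + ∑ j, bOf k σ w j + ∑ j, cOf k σ w j := by
  rw [Fintype.sum_sum_type, ← Finset.sum_add_distrib, ← Finset.sum_add_distrib,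
    ← Finset.sum_add_distrib]
  refine Finset.sum_congr rfl fun j _ => ?_
  rcases fin3 (σ j) with h | h | h <;> simp [aOf, bOf, cOf, h] <;> ring

lemma roundtrip (σ : Fin k → Fin 3) {a b c : Fin k → ℝ}
    (h0 : ∀ j, σ j = 0 → b j = 0) (h1 : ∀ j, σ j = 1 → c j = 0)
    (h2 : ∀ j, σ j = 2 → a j = 0) :
    aOf k σ (wOf k σ a b c) = a ∧ bOf k σ (wOf k σ a b c) = b ∧
      cOf k σ (wOf k σ a b c) = c := by
  refine ⟨funext fun j => ?_, funext fun j => ?_, funext fun j => ?_⟩ <;>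
    rcases fin3 (σ j) with h | h | h <;>
      simp [aOf, bOf, cOf, wOf, h, h0, h1, h2]

lemma mem_cell_iff (hk : 2 ≤ k) (σ : Fin k → Fin 3) {x : V k} :
    x ∈ convexHull ℝ (cell k σ) ↔
    ∃ a b c : Fin k → ℝ, (∀ j, 0 ≤ a j ∧ 0 ≤ b j ∧ 0 ≤ c j) ∧
      (∑ j, a j + ∑ j, b j + ∑ j, c j = 1) ∧
      (∀ j, (σ j = 0 → b j = 0) ∧ (σ j = 1 → c j = 0) ∧ (σ j = 2 → a j = 0)) ∧
      x = combo k a b c := by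
  constructor
  · intro hx
    obtain ⟨w, hw0, hw1, hwx⟩ := extract (cellPt_inj hk σ) hx
    refine ⟨aOf k σ w, bOf k σ w, cOf k σ w, ?_, ?_, ?_, by rw [hwx, sum_w_eq]⟩
    · intro j
      refine ⟨?_, ?_, ?_⟩
      · unfold aOf; split
        · exact le_refl 0
        · exact hw0 _
      · unfold bOf
        apply add_nonneg <;> (split; exacts [hw0 _, le_refl 0])
      · unfold cOf; split
        · exact le_refl 0
        · exact hw0 _
    · rw [← sum_w_weights, hw1]
    · intro j
      refine ⟨fun h => ?_, fun h => ?_, fun h => ?_⟩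
      · simp [bOf, h]
      · simp [cOf, h]
      · simp [aOf, h]
  · rintro ⟨a, b, c, hnn, hsum, hsupp, rfl⟩
    obtain ⟨hA, hB, hC⟩ := roundtrip σ (fun j => (hsupp j).1) (fun j => (hsupp j).2.1)
      (fun j => (hsupp j).2.2)
    have key : combo k a b c = ∑ i, wOf k σ a b c i • cellPt k σ i := by
      rw [sum_w_eq, hA, hB, hC]
    rw [key]
    apply mem_convexHull_of_weights
    · rintro (j | j) <;> unfold wOf <;> simp only [Sum.elim_inl, Sum.elim_inr] <;> split
      · exact (hnn j).2.1
      · exact (hnn j).1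
      · exact (hnn j).2.1
      · exact (hnn j).2.2
    · rw [sum_w_weights σ, hA, hB, hC, hsum]


lemma elimAC_inj : Function.Injective (Sum.elim (vA k) (vC k)) := by
  intro x y h
  cases x with
  | inl j =>
    cases y with
    | inl j' => exact congrArg Sum.inl (vA_inj h)
    | inr j' => exact absurd h (vA_ne_vC _ _)
  | inr j =>
    cases y with
    | inl j' => exact absurd h.symm (vA_ne_vC _ _)
    | inr j' => exact congrArg Sum.inr (vC_inj h)

lemma mem_Delta0_iff (hk : 2 ≤ k) {x : V k} :
    x ∈ Delta0 k ↔ (∀ i, 0 ≤ x i) ∧ ∑ i, x i = 1 := by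
  constructor
  · intro hx
    have hx' : x ∈ convexHull ℝ (Set.range (Sum.elim (vA k) (vC k))) := by
      rw [Set.Sum.elim_range]; exact hx
    obtain ⟨w, hw0, hw1, hwx⟩ := extract elimAC_inj hx'
    have hxc : x = combo k (w ∘ Sum.inl) (fun _ => 0) (w ∘ Sum.inr) := by
      rw [hwx, Fintype.sum_sum_type, combo]
      simp
    constructor
    · intro i
      cases i with
      | inl i => rw [hxc, combo_apply_inl]; simpa using hw0 (Sum.inl i)
      | inr i => rw [hxc, combo_apply_inr]; simpa using hw0 (Sum.inr i)
    · rw [hxc, sum_combo hk, ← hw1, Fintype.sum_sum_type]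
      simp
  · rintro ⟨hpos, hsum⟩
    have hxc : x = combo k (x ∘ Sum.inl) (fun _ => 0) (x ∘ Sum.inr) := by
      funext i
      cases i with
      | inl i => rw [combo_apply_inl]; simp
      | inr i => rw [combo_apply_inr]; simp
    have key : combo k (x ∘ Sum.inl) (fun _ => 0) (x ∘ Sum.inr)
        = ∑ i, (Sum.elim (x ∘ Sum.inl) (x ∘ Sum.inr)) i • Sum.elim (vA k) (vC k) i := by
      rw [Fintype.sum_sum_type, combo]
      simp
    have hmem := mem_convexHull_of_weights (Sum.elim (vA k) (vC k))
      (Sum.elim (x ∘ Sum.inl) (x ∘ Sum.inr))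
      (by rintro (i | i) <;> exact hpos _)
      (by rw [Fintype.sum_sum_type] at hsum ⊢; exact hsum)
    rw [Set.Sum.elim_range] at hmem
    rw [hxc, key]
    exact hmem

lemma elimAB_inj (hk : 2 ≤ k) : Function.Injective (Sum.elim (vA k) (vB k)) := by
  intro x y h
  cases x with
  | inl j =>
    cases y with
    | inl j' => exact congrArg Sum.inl (vA_inj h)
    | inr j' => exact absurd h (vA_ne_vB hk _ _)
  | inr j =>
    cases y with
    | inl j' => exact absurd h.symm (vA_ne_vB hk _ _)
    | inr j' => exact congrArg Sum.inr (vB_inj hk h)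

lemma elimBC_inj (hk : 2 ≤ k) : Function.Injective (Sum.elim (vB k) (vC k)) := by
  intro x y h
  cases x with
  | inl j =>
    cases y with
    | inl j' => exact congrArg Sum.inl (vB_inj hk h)
    | inr j' => exact absurd h.symm (vC_ne_vB hk _ _)
  | inr j =>
    cases y with
    | inl j' => exact absurd h (vC_ne_vB hk _ _)
    | inr j' => exact congrArg Sum.inr (vC_inj h)

lemma mem_Delta1 (hk : 2 ≤ k) {x : V k} (hx : x ∈ Delta1 k) :
    (∀ i, x (Sum.inr i) ≤ x (Sum.inl i)) ∧
      (∀ i, (2 * (k:ℝ) - 1) * x (Sum.inr i) ≤ 2 * ∑ i, x (Sum.inr i)) := by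
  have hx' : x ∈ convexHull ℝ (Set.range (Sum.elim (vA k) (vB k))) := by
    rw [Set.Sum.elim_range]; exact hx
  obtain ⟨w, hw0, hw1, hwx⟩ := extract (elimAB_inj hk) hx'
  have hxc : x = combo k (w ∘ Sum.inl) (w ∘ Sum.inr) (fun _ => 0) := by
    rw [hwx, Fintype.sum_sum_type, combo]
    simp
  set b : Fin k → ℝ := w ∘ Sum.inr with hbdef
  have hSr : ∑ i, x (Sum.inr i) = (∑ j, b j) / 2 := by
    rw [hxc]
    simp only [combo_apply_inr, zero_add]
    exact sum_q hk b
  constructor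
  · intro i
    rw [hxc, combo_apply_inl, combo_apply_inr]
    simp only [zero_add, Function.comp_apply, le_add_iff_nonneg_left]
    exact hw0 _
  · intro i
    have hb0 : 0 ≤ b i := hw0 _
    have key : (2 * (k:ℝ) - 1) * ((2 * (∑ j, b j) - b i) / (2 * (2 * (k:ℝ) - 1)))
        = (2 * (∑ j, b j) - b i) / 2 := by
      have h1 := (nn_pos hk).ne'
      field_simp
    have hsum : 2 * ((∑ j, b j) / 2) = ∑ j, b j := by ring
    rw [hSr, hxc, combo_apply_inr, zero_add, key, hsum]
    linarith

lemma mem_Delta2 (hk : 2 ≤ k) {x : V k} (hx : x ∈ Delta2 k) :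
    (∀ i, x (Sum.inl i) ≤ x (Sum.inr i)) ∧
      (∀ i, (2 * (k:ℝ) - 1) * x (Sum.inl i) ≤ 2 * ∑ i, x (Sum.inl i)) := by
  have hx' : x ∈ convexHull ℝ (Set.range (Sum.elim (vB k) (vC k))) := by
    rw [Set.Sum.elim_range]; exact hx
  obtain ⟨w, hw0, hw1, hwx⟩ := extract (elimBC_inj hk) hx'
  have hxc : x = combo k (fun _ => 0) (w ∘ Sum.inl) (w ∘ Sum.inr) := by
    rw [hwx, Fintype.sum_sum_type, combo]
    simp
  set b : Fin k → ℝ := w ∘ Sum.inl with hbdef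
  have hSr : ∑ i, x (Sum.inl i) = (∑ j, b j) / 2 := by
    rw [hxc]
    simp only [combo_apply_inl, zero_add]
    exact sum_q hk b
  constructor
  · intro i
    rw [hxc, combo_apply_inl, combo_apply_inr]
    simp only [zero_add, Function.comp_apply, le_add_iff_nonneg_left]
    exact hw0 _
  · intro i
    have hb0 : 0 ≤ b i := hw0 _
    have key : (2 * (k:ℝ) - 1) * ((2 * (∑ j, b j) - b i) / (2 * (2 * (k:ℝ) - 1)))
        = (2 * (∑ j, b j) - b i) / 2 := by
      have h1 := (nn_pos hk).ne'
      field_simp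
    have hsum : 2 * ((∑ j, b j) / 2) = ∑ j, b j := by ring
    rw [hSr, hxc, combo_apply_inl, zero_add, key, hsum]
    linarith


lemma waterfill {α : Type*} [DecidableEq α] (s : Finset α) (hs : s.Nonempty) (m : α → ℝ)
    (hm : ∀ a, 0 ≤ m a) :
    ∃ P : Finset α, P ⊆ s ∧ P.Nonempty ∧
      (∀ j ∈ P, (2 * P.card - 1 : ℝ) * m j ≤ 2 * ∑ i ∈ P, m i) ∧
      (∀ j ∈ s, j ∉ P → 2 * ∑ i ∈ P, m i ≤ (2 * P.card - 1 : ℝ) * m j) := by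
  induction s using Finset.strongInduction with
  | _ s IH =>
  obtain ⟨j0, hj0s, hj0max⟩ := s.exists_max_image m hs
  by_cases hs' : (s.erase j0).Nonempty
  · obtain ⟨P, hPs, hPne, hin, hout⟩ := IH (s.erase j0) (Finset.erase_ssubset hj0s) hs'
    have hcard1 : (1:ℝ) ≤ (P.card : ℝ) := by
      exact_mod_cast Nat.one_le_iff_ne_zero.2 (Finset.card_ne_zero_of_mem hPne.choose_spec)
    by_cases hcase : 2 * ∑ i ∈ P, m i ≤ (2 * P.card - 1 : ℝ) * m j0
    · refine ⟨P, hPs.trans (Finset.erase_subset _ _), hPne, hin, ?_⟩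
      intro j hjs hjP
      by_cases hj : j = j0
      · subst hj; exact hcase
      · exact hout j (Finset.mem_erase.2 ⟨hj, hjs⟩) hjP
    · push_neg at hcase
      have hPfull : P = s.erase j0 := by
        apply Finset.Subset.antisymm hPs
        intro j hj
        by_contra hjP
        have h1 := hout j hj hjP
        have h2 : m j ≤ m j0 := hj0max j (Finset.mem_of_mem_erase hj)
        have hpos : (0:ℝ) ≤ 2 * P.card - 1 := by linarith
        have h3 := mul_le_mul_of_nonneg_left h2 hpos
        linarith
      have hnotin : j0 ∉ P := by rw [hPfull]; exact Finset.notMem_erase _ _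
      refine ⟨insert j0 P, ?_, ⟨j0, Finset.mem_insert_self _ _⟩, ?_, ?_⟩
      · rw [hPfull, Finset.insert_erase hj0s]
      · intro j hj
        rw [Finset.card_insert_of_notMem hnotin, Finset.sum_insert hnotin]
        push_cast
        rcases Finset.mem_insert.1 hj with rfl | hjP
        · linarith
        · have h1 := hin j hjP
          have h2 : m j ≤ m j0 := hj0max j (Finset.mem_of_mem_erase (hPs hjP))
          linarith
      · intro j hjs hjP
        exfalso
        apply hjP
        rw [hPfull, Finset.insert_erase hj0s]
        exact hjs
  · have hs1 : s = {j0} := by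
      rw [Finset.not_nonempty_iff_eq_empty] at hs'
      apply Finset.eq_singleton_iff_unique_mem.2
      refine ⟨hj0s, fun x hx => ?_⟩
      by_contra hxj
      have : x ∈ s.erase j0 := Finset.mem_erase.2 ⟨hxj, hx⟩
      rw [hs'] at this
      exact absurd this (Finset.notMem_empty x)
    refine ⟨{j0}, by rw [hs1], ⟨j0, Finset.mem_singleton_self j0⟩, ?_, ?_⟩
    · intro j hj
      rw [Finset.mem_singleton] at hj; subst hj
      rw [Finset.sum_singleton, Finset.card_singleton]
      push_cast
      linarith [hm j]
    · intro j hjs hjP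
      rw [hs1, Finset.mem_singleton] at hjs
      exact absurd (Finset.mem_singleton.2 hjs) hjP

lemma combo_mem_Delta0 (hk : 2 ≤ k) {a b c : Fin k → ℝ}
    (ha : ∀ j, 0 ≤ a j) (hb : ∀ j, 0 ≤ b j) (hc : ∀ j, 0 ≤ c j)
    (hsum : ∑ j, a j + ∑ j, b j + ∑ j, c j = 1) :
    combo k a b c ∈ Delta0 k := by
  rw [mem_Delta0_iff hk]
  have hβ : (0:ℝ) ≤ ∑ j, b j := Finset.sum_nonneg fun j _ => hb j
  have hble : ∀ i, b i ≤ ∑ j, b j := fun i =>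
    Finset.single_le_sum (fun j _ => hb j) (Finset.mem_univ i)
  constructor
  · intro i
    cases i with
    | inl i =>
      rw [combo_apply_inl]
      have : (0:ℝ) ≤ (2 * (∑ j, b j) - b i) / (2 * (2 * (k:ℝ) - 1)) :=
        div_nonneg (by linarith [hble i]) (DD_pos hk).le
      linarith [ha i]
    | inr i =>
      rw [combo_apply_inr]
      have : (0:ℝ) ≤ (2 * (∑ j, b j) - b i) / (2 * (2 * (k:ℝ) - 1)) :=
        div_nonneg (by linarith [hble i]) (DD_pos hk).le
      linarith [hc i]
  · rw [sum_combo hk, hsum]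

lemma covering (hk : 2 ≤ k) {x : V k} (hx : x ∈ Delta0 k) :
    ∃ σ : Fin k → Fin 3, σ ≠ (fun _ => 0) ∧ x ∈ convexHull ℝ (cell k σ) := by
  obtain ⟨hpos, hsum⟩ := (mem_Delta0_iff hk).1 hx
  set m : Fin k → ℝ := fun j => min (x (Sum.inl j)) (x (Sum.inr j)) with hm_def
  have hm : ∀ j, 0 ≤ m j := fun j => le_min (hpos _) (hpos _)
  have huniv : (Finset.univ : Finset (Fin k)).Nonempty := ⟨⟨0, by omega⟩, Finset.mem_univ _⟩
  obtain ⟨P, _, hPne, hin, hout⟩ := waterfill Finset.univ huniv m hm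
  set p : ℝ := (P.card : ℝ) with hp_def
  have hp1 : (1:ℝ) ≤ p := by
    rw [hp_def]
    exact_mod_cast Nat.one_le_iff_ne_zero.2 (Finset.card_ne_zero_of_mem hPne.choose_spec)
  set q : ℝ := 2 * p - 1 with hq_def
  have hq : (0:ℝ) < q := by simp only [hq_def]; linarith
  set T : ℝ := ∑ i ∈ P, m i with hT_def
  have hT0 : (0:ℝ) ≤ T := Finset.sum_nonneg fun i _ => hm i
  set tt : ℝ := 2 * T / q with htt_def
  have htt0 : (0:ℝ) ≤ tt := div_nonneg (by linarith) hq.le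
  set nn : ℝ := 2 * (k:ℝ) - 1 with hnn_def
  have hnn0 : (0:ℝ) < nn := nn_pos hk
  have hnn1 := (nn_pos hk).ne'
  set βv : ℝ := nn * tt with hβv_def
  set D : ℝ := 2 * (2 * (k:ℝ) - 1) with hD_def
  have hD0 : (0:ℝ) < D := DD_pos hk
  -- the weights
  set a : Fin k → ℝ := fun j => if j ∈ P then
      (if x (Sum.inr j) ≤ x (Sum.inl j) then x (Sum.inl j) - x (Sum.inr j) else 0)
    else x (Sum.inl j) - tt with ha_def
  set c : Fin k → ℝ := fun j => if j ∈ P then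
      (if x (Sum.inr j) ≤ x (Sum.inl j) then 0 else x (Sum.inr j) - x (Sum.inl j))
    else x (Sum.inr j) - tt with hc_def
  set b : Fin k → ℝ := fun j => if j ∈ P then 2 * βv - D * m j else 0 with hb_def
  set σ : Fin k → Fin 3 := fun j => if j ∈ P then
      (if x (Sum.inr j) ≤ x (Sum.inl j) then 1 else 2) else 0 with hσ_def
  -- membership bounds
  have hmle : ∀ j ∈ P, m j ≤ tt := by
    intro j hj
    rw [htt_def, le_div_iff₀ hq]
    linarith [hin j hj]
  have hmge : ∀ j, j ∉ P → tt ≤ m j := by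
    intro j hj
    rw [htt_def, div_le_iff₀ hq]
    linarith [hout j (Finset.mem_univ j) hj]
  have h2T : tt * q = 2 * T := div_mul_cancel₀ (2 * T) hq.ne'
  have hb_sum : ∑ j, b j = βv := by
    simp only [hb_def]
    simp only [Finset.sum_ite_mem, Finset.univ_inter]
    rw [Finset.sum_sub_distrib, Finset.sum_const, ← Finset.mul_sum, nsmul_eq_mul, ← hT_def,
      ← hp_def]
    rw [hβv_def, hnn_def, hD_def]
    rw [hq_def] at h2T
    linear_combination (2 * (k:ℝ) - 1) * h2T
  have hq2 : 2 * βv / (2 * (2 * (k:ℝ) - 1)) = tt := by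
    rw [hβv_def, hnn_def]
    field_simp
  have hx_inl : ∀ i, combo k a b c (Sum.inl i) = x (Sum.inl i) := by
    intro i
    rw [combo_apply_inl, hb_sum]
    by_cases hiP : i ∈ P
    · have hbi : b i = 2 * βv - D * m i := by simp only [hb_def, if_pos hiP]
      by_cases hle : x (Sum.inr i) ≤ x (Sum.inl i)
      · have hai : a i = x (Sum.inl i) - x (Sum.inr i) := by
          simp only [ha_def, if_pos hiP, if_pos hle]
        have hmi : m i = x (Sum.inr i) := min_eq_right hle
        rw [hai, hbi, hD_def, hmi]
        field_simp
        ring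
      · have hai : a i = 0 := by simp only [ha_def, if_pos hiP, if_neg hle]
        have hmi : m i = x (Sum.inl i) := min_eq_left (le_of_not_ge hle)
        rw [hai, hbi, hD_def, hmi]
        field_simp
        ring
    · have hbi : b i = 0 := by simp only [hb_def, if_neg hiP]
      have hai : a i = x (Sum.inl i) - tt := by simp only [ha_def, if_neg hiP]
      rw [hai, hbi, sub_zero, hq2]
      ring
  have hx_inr : ∀ i, combo k a b c (Sum.inr i) = x (Sum.inr i) := by
    intro i
    rw [combo_apply_inr, hb_sum]
    by_cases hiP : i ∈ P
    · have hbi : b i = 2 * βv - D * m i := by simp only [hb_def, if_pos hiP]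
      by_cases hle : x (Sum.inr i) ≤ x (Sum.inl i)
      · have hci : c i = 0 := by simp only [hc_def, if_pos hiP, if_pos hle]
        have hmi : m i = x (Sum.inr i) := min_eq_right hle
        rw [hci, hbi, hD_def, hmi]
        field_simp
        ring
      · have hci : c i = x (Sum.inr i) - x (Sum.inl i) := by
          simp only [hc_def, if_pos hiP, if_neg hle]
        have hmi : m i = x (Sum.inl i) := min_eq_left (le_of_not_ge hle)
        rw [hci, hbi, hD_def, hmi]
        field_simp
        ring
    · have hbi : b i = 0 := by simp only [hb_def, if_neg hiP]
      have hci : c i = x (Sum.inr i) - tt := by simp only [hc_def, if_neg hiP]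
      rw [hci, hbi, sub_zero, hq2]
      ring
  have hxc : x = combo k a b c := by
    funext i
    cases i with
    | inl i => exact (hx_inl i).symm
    | inr i => exact (hx_inr i).symm
  have hsum1 : ∑ j, a j + ∑ j, b j + ∑ j, c j = 1 := by
    rw [← sum_combo hk a b c]
    calc ∑ i, combo k a b c i = ∑ i, x i := by rw [← hxc]
    _ = 1 := hsum
  have ha_nn : ∀ j, 0 ≤ a j := by
    intro j
    simp only [ha_def]
    by_cases hjP : j ∈ P
    · rw [if_pos hjP]
      by_cases hle : x (Sum.inr j) ≤ x (Sum.inl j)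
      · rw [if_pos hle]; linarith
      · rw [if_neg hle]
    · rw [if_neg hjP]
      have h1 := hmge j hjP
      have h2 : m j ≤ x (Sum.inl j) := min_le_left _ _
      linarith
  have hc_nn : ∀ j, 0 ≤ c j := by
    intro j
    simp only [hc_def]
    by_cases hjP : j ∈ P
    · rw [if_pos hjP]
      by_cases hle : x (Sum.inr j) ≤ x (Sum.inl j)
      · rw [if_pos hle]
      · rw [if_neg hle]; linarith [le_of_not_ge hle]
    · rw [if_neg hjP]
      have h1 := hmge j hjP
      have h2 : m j ≤ x (Sum.inr j) := min_le_right _ _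
      linarith
  have hb_nn : ∀ j, 0 ≤ b j := by
    intro j
    simp only [hb_def]
    by_cases hjP : j ∈ P
    · rw [if_pos hjP, hβv_def, hD_def, hnn_def]
      nlinarith [hmle j hjP, hnn0, hnn_def ▸ hnn0]
    · rw [if_neg hjP]
  have hσne : σ ≠ (fun _ => 0) := by
    obtain ⟨j0, hj0⟩ := hPne
    intro h
    have h0 := congrFun h j0
    simp only [hσ_def] at h0
    simp only [if_pos hj0] at h0
    split_ifs at h0 <;> exact absurd h0 (by decide)
  refine ⟨σ, hσne, (mem_cell_iff hk σ).2 ⟨a, b, c, fun j => ⟨ha_nn j, hb_nn j, hc_nn j⟩,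
    hsum1, ?_, hxc⟩⟩
  intro j
  refine ⟨fun h0 => ?_, fun h1 => ?_, fun h2 => ?_⟩
  · -- σ j = 0 → b j = 0
    simp only [hb_def]
    simp only [hσ_def] at h0
    by_cases hjP : j ∈ P
    · exfalso
      simp only [if_pos hjP] at h0
      split_ifs at h0 <;> exact absurd h0 (by decide)
    · rw [if_neg hjP]
  · -- σ j = 1 → c j = 0
    simp only [hc_def]
    simp only [hσ_def] at h1
    by_cases hjP : j ∈ P
    · simp only [if_pos hjP] at h1
      by_cases hle : x (Sum.inr j) ≤ x (Sum.inl j)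
      · rw [if_pos hjP, if_pos hle]
      · exfalso; rw [if_neg hle] at h1; exact absurd h1 (by decide)
    · exfalso; rw [if_neg hjP] at h1; exact absurd h1 (by decide)
  · -- σ j = 2 → a j = 0
    simp only [ha_def]
    simp only [hσ_def] at h2
    by_cases hjP : j ∈ P
    · simp only [if_pos hjP] at h2
      by_cases hle : x (Sum.inr j) ≤ x (Sum.inl j)
      · exfalso; rw [if_pos hle] at h2; exact absurd h2 (by decide)
      · rw [if_pos hjP, if_neg hle]
    · exfalso; rw [if_neg hjP] at h2; exact absurd h2 (by decide)


lemma sum_inr_combo (hk : 2 ≤ k) (a b c : Fin k → ℝ) :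
    ∑ i, combo k a b c (Sum.inr i) = ∑ j, c j + (∑ j, b j) / 2 := by
  simp only [combo_apply_inr]
  rw [Finset.sum_add_distrib, sum_q hk]

lemma sum_inl_combo (hk : 2 ≤ k) (a b c : Fin k → ℝ) :
    ∑ i, combo k a b c (Sum.inl i) = ∑ j, a j + (∑ j, b j) / 2 := by
  simp only [combo_apply_inl]
  rw [Finset.sum_add_distrib, sum_q hk]

lemma strict_not_mem_Delta1 (hk : 2 ≤ k) (σ : Fin k → Fin 3)
    (hσ0 : σ ≠ (fun _ => 0)) (hσ1 : σ ≠ (fun _ => 1))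
    {a b c : Fin k → ℝ}
    (hstrict : ∀ j, (σ j = 0 → 0 < a j ∧ b j = 0 ∧ 0 < c j) ∧
        (σ j = 1 → 0 < a j ∧ 0 < b j ∧ c j = 0) ∧
        (σ j = 2 → a j = 0 ∧ 0 < b j ∧ 0 < c j)) :
    combo k a b c ∉ Delta1 k := by
  intro hmem
  obtain ⟨hge, hcond⟩ := mem_Delta1 hk hmem
  by_cases hex2 : ∃ j, σ j = 2
  · obtain ⟨j, hj⟩ := hex2
    obtain ⟨haz, hbz, hcz⟩ := (hstrict j).2.2 hj
    have h1 := hge j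
    rw [combo_apply_inl, combo_apply_inr, haz] at h1
    linarith
  · push_neg at hex2
    have hex0 : ∃ j, σ j = 0 := by
      by_contra h
      push_neg at h
      apply hσ1
      funext j
      rcases fin3 (σ j) with h0 | h0 | h0
      · exact absurd h0 (h j)
      · exact h0
      · exact absurd h0 (hex2 j)
    obtain ⟨j1, hj1⟩ := hex0
    classical
    set Q := Finset.univ.filter (fun j => σ j = 0) with hQ_def
    have hQne : Q.Nonempty := ⟨j1, by simp [hQ_def, hj1]⟩
    have hCeq : ∑ j, c j = ∑ j ∈ Q, c j := by
      symm
      apply Finset.sum_subset (Finset.subset_univ Q)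
      intro j _ hjQ
      have hj0 : σ j ≠ 0 := by
        intro h; exact hjQ (by simp [hQ_def, h])
      rcases fin3 (σ j) with h0 | h0 | h0
      · exact absurd h0 hj0
      · exact ((hstrict j).2.1 h0).2.2
      · exact absurd h0 (hex2 j)
    have hCpos : 0 < ∑ j ∈ Q, c j := by
      apply Finset.sum_pos _ hQne
      intro j hj
      have h0 : σ j = 0 := by simpa [hQ_def] using hj
      exact ((hstrict j).1 h0).2.2
    have hkey : ∀ j ∈ Q, (2 * (k:ℝ) - 1) * c j ≤ 2 * ∑ i ∈ Q, c i := by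
      intro j hj
      have h0 : σ j = 0 := by simpa [hQ_def] using hj
      have hbz : b j = 0 := ((hstrict j).1 h0).2.1
      have hc := hcond j
      rw [sum_inr_combo hk, combo_apply_inr, hbz] at hc
      have hq2 : (2 * (k:ℝ) - 1) * ((2 * (∑ j, b j) - 0) / (2 * (2 * (k:ℝ) - 1)))
          = ∑ j, b j := by
        have h1 := (nn_pos hk).ne'
        field_simp
        ring
      rw [mul_add, hq2] at hc
      rw [hCeq] at hc
      linarith
    have hsum_ineq := Finset.sum_le_sum hkey
    rw [← Finset.mul_sum, Finset.sum_const, nsmul_eq_mul] at hsum_ineq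
    have hQcard : ((Q.card : ℝ)) ≤ (k:ℝ) - 1 := by
      have hne : ∃ j2, σ j2 ≠ 0 := by
        by_contra h
        push_neg at h
        exact hσ0 (funext h)
      obtain ⟨j2, hj2⟩ := hne
      have hlt : Q.card < k := by
        have hss : Q ⊂ Finset.univ := by
          refine Finset.ssubset_iff_subset_ne.2 ⟨Finset.subset_univ Q, ?_⟩
          intro h
          apply hj2
          have : j2 ∈ Q := by rw [h]; exact Finset.mem_univ _
          simpa [hQ_def] using this
        have := Finset.card_lt_card hss
        simpa using this
      have h7 : Q.card + 1 ≤ k := hlt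
      have h8 : (Q.card : ℝ) + 1 ≤ (k:ℝ) := by exact_mod_cast h7
      linarith
    have h6 : (Q.card:ℝ) * (∑ i ∈ Q, c i) ≤ ((k:ℝ) - 1) * (∑ i ∈ Q, c i) :=
      mul_le_mul_of_nonneg_right hQcard hCpos.le
    nlinarith


lemma strict_not_mem_Delta2 (hk : 2 ≤ k) (σ : Fin k → Fin 3)
    (hσ0 : σ ≠ (fun _ => 0)) (hσ2 : σ ≠ (fun _ => 2))
    {a b c : Fin k → ℝ}
    (hstrict : ∀ j, (σ j = 0 → 0 < a j ∧ b j = 0 ∧ 0 < c j) ∧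
        (σ j = 1 → 0 < a j ∧ 0 < b j ∧ c j = 0) ∧
        (σ j = 2 → a j = 0 ∧ 0 < b j ∧ 0 < c j)) :
    combo k a b c ∉ Delta2 k := by
  intro hmem
  obtain ⟨hge, hcond⟩ := mem_Delta2 hk hmem
  by_cases hex1 : ∃ j, σ j = 1
  · obtain ⟨j, hj⟩ := hex1
    obtain ⟨haz, hbz, hcz⟩ := (hstrict j).2.1 hj
    have h1 := hge j
    rw [combo_apply_inl, combo_apply_inr, hcz] at h1
    linarith
  · push_neg at hex1
    have hex0 : ∃ j, σ j = 0 := by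
      by_contra h
      push_neg at h
      apply hσ2
      funext j
      rcases fin3 (σ j) with h0 | h0 | h0
      · exact absurd h0 (h j)
      · exact absurd h0 (hex1 j)
      · exact h0
    obtain ⟨j1, hj1⟩ := hex0
    classical
    set Q := Finset.univ.filter (fun j => σ j = 0) with hQ_def
    have hQne : Q.Nonempty := ⟨j1, by simp [hQ_def, hj1]⟩
    have hCeq : ∑ j, a j = ∑ j ∈ Q, a j := by
      symm
      apply Finset.sum_subset (Finset.subset_univ Q)
      intro j _ hjQ
      have hj0 : σ j ≠ 0 := by
        intro h; exact hjQ (by simp [hQ_def, h])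
      rcases fin3 (σ j) with h0 | h0 | h0
      · exact absurd h0 hj0
      · exact absurd h0 (hex1 j)
      · exact ((hstrict j).2.2 h0).1
    have hCpos : 0 < ∑ j ∈ Q, a j := by
      apply Finset.sum_pos _ hQne
      intro j hj
      have h0 : σ j = 0 := by simpa [hQ_def] using hj
      exact ((hstrict j).1 h0).1
    have hkey : ∀ j ∈ Q, (2 * (k:ℝ) - 1) * a j ≤ 2 * ∑ i ∈ Q, a i := by
      intro j hj
      have h0 : σ j = 0 := by simpa [hQ_def] using hj
      have hbz : b j = 0 := ((hstrict j).1 h0).2.1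
      have hc := hcond j
      rw [sum_inl_combo hk, combo_apply_inl, hbz] at hc
      have hq2 : (2 * (k:ℝ) - 1) * ((2 * (∑ j, b j) - 0) / (2 * (2 * (k:ℝ) - 1)))
          = ∑ j, b j := by
        have h1 := (nn_pos hk).ne'
        field_simp
        ring
      rw [mul_add, hq2] at hc
      rw [hCeq] at hc
      linarith
    have hsum_ineq := Finset.sum_le_sum hkey
    rw [← Finset.mul_sum, Finset.sum_const, nsmul_eq_mul] at hsum_ineq
    have hQcard : ((Q.card : ℝ)) ≤ (k:ℝ) - 1 := by
      have hne : ∃ j2, σ j2 ≠ 0 := by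
        by_contra h
        push_neg at h
        exact hσ0 (funext h)
      obtain ⟨j2, hj2⟩ := hne
      have hlt : Q.card < k := by
        have hss : Q ⊂ Finset.univ := by
          refine Finset.ssubset_iff_subset_ne.2 ⟨Finset.subset_univ Q, ?_⟩
          intro h
          apply hj2
          have : j2 ∈ Q := by rw [h]; exact Finset.mem_univ _
          simpa [hQ_def] using this
        have := Finset.card_lt_card hss
        simpa using this
      have h7 : Q.card + 1 ≤ k := hlt
      have h8 : (Q.card : ℝ) + 1 ≤ (k:ℝ) := by exact_mod_cast h7
      linarith
    have h6 : (Q.card:ℝ) * (∑ i ∈ Q, a i) ≤ ((k:ℝ) - 1) * (∑ i ∈ Q, a i) :=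
      mul_le_mul_of_nonneg_right hQcard hCpos.le
    nlinarith


lemma combo_affine (t : ℝ) (a b c a' b' c' : Fin k → ℝ) :
    combo k (fun j => (1 - t) * a j + t * a' j) (fun j => (1 - t) * b j + t * b' j)
      (fun j => (1 - t) * c j + t * c' j)
    = (1 - t) • combo k a b c + t • combo k a' b' c' := by
  funext i
  have hsumb : ∑ j, ((1 - t) * b j + t * b' j)
      = (1 - t) * ∑ j, b j + t * ∑ j, b' j := by
    rw [Finset.sum_add_distrib, Finset.mul_sum, Finset.mul_sum]
  cases i with
  | inl i =>
    simp only [Pi.add_apply, Pi.smul_apply, smul_eq_mul, combo_apply_inl, hsumb]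
    ring
  | inr i =>
    simp only [Pi.add_apply, Pi.smul_apply, smul_eq_mul, combo_apply_inr, hsumb]
    ring

lemma cell_subset_closure (hk : 2 ≤ k) (σ : Fin k → Fin 3)
    (hσ0 : σ ≠ (fun _ => 0)) (hσ1 : σ ≠ (fun _ => 1)) (hσ2 : σ ≠ (fun _ => 2)) :
    convexHull ℝ (cell k σ) ⊆ OmegaB k := by
  intro x hx
  obtain ⟨a, b, c, hnn, hsum, hsupp, rfl⟩ := (mem_cell_iff hk σ).1 hx
  have hk0 : (0:ℝ) < (k:ℝ) := by
    have : (2:ℝ) ≤ (k:ℝ) := by exact_mod_cast hk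
    linarith
  set a0 : Fin k → ℝ := fun j => if σ j = 2 then 0 else 1/(2*(k:ℝ)) with ha0_def
  set b0 : Fin k → ℝ := fun j => if σ j = 0 then 0 else 1/(2*(k:ℝ)) with hb0_def
  set c0 : Fin k → ℝ := fun j => if σ j = 1 then 0 else 1/(2*(k:ℝ)) with hc0_def
  have hsum0 : ∑ j, a0 j + ∑ j, b0 j + ∑ j, c0 j = 1 := by
    rw [← Finset.sum_add_distrib, ← Finset.sum_add_distrib]
    have hcol : ∀ j, a0 j + b0 j + c0 j = 1/(k:ℝ) := by
      intro j
      rcases fin3 (σ j) with h | h | h <;>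
        simp [ha0_def, hb0_def, hc0_def, h] <;> field_simp <;> ring
    rw [Finset.sum_congr rfl (fun j _ => hcol j), Finset.sum_const, Finset.card_univ,
      Fintype.card_fin, nsmul_eq_mul]
    field_simp
  set x0 : V k := combo k a0 b0 c0 with hx0_def
  have key : ∀ t : ℝ, 0 < t → t ≤ 1 →
      (1 - t) • combo k a b c + t • x0 ∈ Delta0 k \ (Delta1 k ∪ Delta2 k) := by
    intro t ht0 ht1
    rw [hx0_def, ← combo_affine]
    have h2k : (0:ℝ) < 1/(2*(k:ℝ)) := by positivity
    have hstrict : ∀ j,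
        (σ j = 0 → 0 < (1-t) * a j + t * a0 j ∧ (1-t) * b j + t * b0 j = 0 ∧
          0 < (1-t) * c j + t * c0 j) ∧
        (σ j = 1 → 0 < (1-t) * a j + t * a0 j ∧ 0 < (1-t) * b j + t * b0 j ∧
          (1-t) * c j + t * c0 j = 0) ∧
        (σ j = 2 → (1-t) * a j + t * a0 j = 0 ∧ 0 < (1-t) * b j + t * b0 j ∧
          0 < (1-t) * c j + t * c0 j) := by
      intro j
      obtain ⟨hna, hnb, hnc⟩ := hnn j
      refine ⟨fun h => ?_, fun h => ?_, fun h => ?_⟩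
      · have hb' : b j = 0 := (hsupp j).1 h
        refine ⟨?_, ?_, ?_⟩
        · have : a0 j = 1/(2*(k:ℝ)) := by simp [ha0_def, h]
          nlinarith
        · simp [hb0_def, h, hb']
        · have : c0 j = 1/(2*(k:ℝ)) := by simp [hc0_def, h]
          nlinarith
      · have hc' : c j = 0 := (hsupp j).2.1 h
        refine ⟨?_, ?_, ?_⟩
        · have : a0 j = 1/(2*(k:ℝ)) := by simp [ha0_def, h]
          nlinarith
        · have : b0 j = 1/(2*(k:ℝ)) := by simp [hb0_def, h]
          nlinarith
        · simp [hc0_def, h, hc']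
      · have ha' : a j = 0 := (hsupp j).2.2 h
        refine ⟨?_, ?_, ?_⟩
        · simp [ha0_def, h, ha']
        · have : b0 j = 1/(2*(k:ℝ)) := by simp [hb0_def, h]
          nlinarith
        · have : c0 j = 1/(2*(k:ℝ)) := by simp [hc0_def, h]
          nlinarith
    constructor
    · apply combo_mem_Delta0 hk
      · intro j
        obtain ⟨hna, _, _⟩ := hnn j
        have ha0nn : 0 ≤ a0 j := by
          simp only [ha0_def]; split
          · exact le_refl 0
          · positivity
        nlinarith
      · intro j
        obtain ⟨_, hnb, _⟩ := hnn j
        have hb0nn : 0 ≤ b0 j := by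
          simp only [hb0_def]; split
          · exact le_refl 0
          · positivity
        nlinarith
      · intro j
        obtain ⟨_, _, hnc⟩ := hnn j
        have hc0nn : 0 ≤ c0 j := by
          simp only [hc0_def]; split
          · exact le_refl 0
          · positivity
        nlinarith
      · simp only [Finset.sum_add_distrib, ← Finset.mul_sum]
        linear_combination (1 - t) * hsum + t * hsum0
    · rintro (hmem | hmem)
      · exact strict_not_mem_Delta1 hk σ hσ0 hσ1 hstrict hmem
      · exact strict_not_mem_Delta2 hk σ hσ0 hσ2 hstrict hmem
  have hθ : Filter.Tendsto (fun n : ℕ => 1/((n:ℝ)+1)) Filter.atTop (nhds 0) :=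
    tendsto_one_div_add_atTop_nhds_zero_nat
  have hcont : Continuous (fun θ : ℝ => (1 - θ) • combo k a b c + θ • x0) :=
    (((continuous_const.sub continuous_id).smul continuous_const).add
      (continuous_id.smul continuous_const))
  have htend : Filter.Tendsto
      (fun n : ℕ => (1 - 1/((n:ℝ)+1)) • combo k a b c + (1/((n:ℝ)+1)) • x0)
      Filter.atTop (nhds (combo k a b c)) := by
    have h2 := (hcont.tendsto 0).comp hθ
    simpa [Function.comp_def] using h2
  apply mem_closure_of_tendsto htend
  apply Filter.Eventually.of_forall
  intro n
  apply key
  · positivity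
  · rw [div_le_one (by positivity)]
    linarith [Nat.cast_nonneg (α := ℝ) n]


lemma cell_subset_setX (σ : Fin k → Fin 3) : cell k σ ⊆ setX k := by
  rintro v ⟨i, rfl⟩
  cases i with
  | inl j =>
    show cellFst k σ j ∈ setX k
    unfold cellFst
    split_ifs
    · exact Or.inl (Or.inr ⟨j, rfl⟩)
    · exact Or.inl (Or.inl ⟨j, rfl⟩)
  | inr j =>
    show cellSnd k σ j ∈ setX k
    unfold cellSnd
    split_ifs
    · exact Or.inl (Or.inr ⟨j, rfl⟩)
    · exact Or.inr ⟨j, rfl⟩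

lemma cell_ncard (hk : 2 ≤ k) (σ : Fin k → Fin 3) : (cell k σ).ncard = 2 * k := by
  rw [cell, ← Set.image_univ, Set.ncard_image_of_injective _ (cellPt_inj hk σ),
    Set.ncard_univ, Nat.card_sum]
  simp [Nat.card_eq_fintype_card]
  ring

lemma isGood_cell (hk : 2 ≤ k) (σ : Fin k → Fin 3) (hσ0 : σ ≠ (fun _ => 0)) :
    IsGood k (cell k σ) := by
  refine ⟨cell_subset_setX σ, cell_ncard hk σ, ?_, ?_⟩
  · intro j h
    have hA : vA k j ∈ cell k σ := h (Set.mem_insert _ _)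
    have hB : vB k j ∈ cell k σ := h (Set.mem_insert_of_mem _ (Set.mem_insert _ _))
    have hC : vC k j ∈ cell k σ := h (Set.mem_insert_of_mem _ (Set.mem_insert_of_mem _ rfl))
    have h2 := (vA_mem_cell_iff hk σ j).1 hA
    have h0 := (vB_mem_cell_iff hk σ j).1 hB
    have h1 := (vC_mem_cell_iff hk σ j).1 hC
    rcases fin3 (σ j) with h' | h' | h' <;> [exact h0 h'; exact h1 h'; exact h2 h']
  · intro h
    exact hσ0 (cell_inj hk (h.trans cell_zero.symm))

lemma good_eq_cell (hk : 2 ≤ k) {S : Set (V k)} (hS : IsGood k S) :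
    ∃ σ : Fin k → Fin 3, σ ≠ (fun _ => 0) ∧ S = cell k σ := by
  classical
  obtain ⟨hsub, hcard, htriple, hne⟩ := hS
  have hXfin : (setX k).Finite :=
    ((Set.finite_range _).union (Set.finite_range _)).union (Set.finite_range _)
  have hSfin : S.Finite := hXfin.subset hsub
  set F := hSfin.toFinset with hF_def
  have hFcard : F.card = 2 * k := by
    rw [hF_def, ← Set.ncard_eq_toFinset_card _ hSfin]
    exact hcard
  set col : Fin k → Finset (V k) := fun j => {vA k j, vB k j, vC k j} with hcol_def
  have hmem_col : ∀ j v, v ∈ col j ↔ (v = vA k j ∨ v = vB k j ∨ v = vC k j) := by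
    intro j v
    simp [hcol_def]
  have hdisj : ∀ i ∈ Finset.univ, ∀ j ∈ Finset.univ, i ≠ j →
      Disjoint (F ∩ col i) (F ∩ col j) := by
    intro i _ j _ hij
    rw [Finset.disjoint_left]
    intro v hvi hvj
    have h1 := (hmem_col i v).1 (Finset.mem_inter.1 hvi).2
    have h2 := (hmem_col j v).1 (Finset.mem_inter.1 hvj).2
    rcases h1 with rfl | rfl | rfl <;> rcases h2 with h | h | h
    exacts [hij (vA_inj h), vA_ne_vB hk i j h, vA_ne_vC i j h,
      vA_ne_vB hk j i h.symm, hij (vB_inj hk h), vC_ne_vB hk j i h.symm,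
      vA_ne_vC j i h.symm, vC_ne_vB hk i j h, hij (vC_inj h)]
  have hcover : F = Finset.univ.biUnion (fun j => F ∩ col j) := by
    ext v
    simp only [Finset.mem_biUnion, Finset.mem_univ, true_and, Finset.mem_inter]
    constructor
    · intro hv
      have hvS : v ∈ S := hSfin.mem_toFinset.1 hv
      rcases hsub hvS with (⟨j, rfl⟩ | ⟨j, rfl⟩) | ⟨j, rfl⟩
      · exact ⟨j, hv, (hmem_col j _).2 (Or.inl rfl)⟩
      · exact ⟨j, hv, (hmem_col j _).2 (Or.inr (Or.inl rfl))⟩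
      · exact ⟨j, hv, (hmem_col j _).2 (Or.inr (Or.inr rfl))⟩
    · rintro ⟨j, hvF, _⟩
      exact hvF
  have hle : ∀ j, (F ∩ col j).card ≤ 2 := by
    intro j
    by_contra hgt
    push_neg at hgt
    have hsub3 : F ∩ col j ⊆ col j := Finset.inter_subset_right
    have hcol3 : (col j).card ≤ 3 := by
      rw [hcol_def]
      apply le_trans (Finset.card_insert_le _ _)
      have := Finset.card_insert_le (vB k j) ({vC k j} : Finset (V k))
      simp at this ⊢
      omega
    have heq : F ∩ col j = col j := Finset.eq_of_subset_of_card_le hsub3 (by omega)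
    apply htriple j
    intro v hv
    have hvcol : v ∈ col j := by
      rw [hmem_col]
      rcases hv with rfl | hv
      · exact Or.inl rfl
      · rcases hv with rfl | hv
        · exact Or.inr (Or.inl rfl)
        · exact Or.inr (Or.inr hv)
    rw [← heq] at hvcol
    exact hSfin.mem_toFinset.1 (Finset.mem_inter.1 hvcol).1
  have hsum : ∑ j, (F ∩ col j).card = 2 * k := by
    rw [← Finset.card_biUnion hdisj, ← hcover, hFcard]
  have hcard2 : ∀ j, (F ∩ col j).card = 2 := by
    intro j
    by_contra hne2
    have hlt : (F ∩ col j).card < 2 := lt_of_le_of_ne (hle j) hne2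
    have hslt : ∑ i, (F ∩ col i).card < ∑ _i : Fin k, 2 :=
      Finset.sum_lt_sum (fun i _ => hle i) ⟨j, Finset.mem_univ j, hlt⟩
    rw [hsum, Finset.sum_const, Finset.card_univ, Fintype.card_fin, smul_eq_mul] at hslt
    omega
  have hsingleton : ∀ (j : Fin k) (u : V k),
      (∀ v, v ∈ col j → v ∈ S → v = u) → False := by
    intro j u huniq
    have hss : F ∩ col j ⊆ {u} := by
      intro v hv
      obtain ⟨hvF, hvc⟩ := Finset.mem_inter.1 hv
      exact Finset.mem_singleton.2 (huniq v hvc (hSfin.mem_toFinset.1 hvF))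
    have := (Finset.card_le_card hss).trans_eq (Finset.card_singleton u)
    rw [hcard2 j] at this
    omega
  have htwo : ∀ j, (vA k j ∈ S ∧ vB k j ∈ S) ∨ (vA k j ∈ S ∧ vC k j ∈ S) ∨
      (vB k j ∈ S ∧ vC k j ∈ S) := by
    intro j
    by_contra hcon
    push_neg at hcon
    obtain ⟨h1, h2, h3⟩ := hcon
    by_cases hA : vA k j ∈ S <;> by_cases hB : vB k j ∈ S <;> by_cases hC : vC k j ∈ S
    · exact h1 hA hB
    · exact h1 hA hB
    · exact h2 hA hC
    · refine hsingleton j (vA k j) fun v hv hvS => ?_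
      rcases (hmem_col j v).1 hv with rfl | rfl | rfl
      · rfl
      · exact absurd hvS hB
      · exact absurd hvS hC
    · exact h3 hB hC
    · refine hsingleton j (vB k j) fun v hv hvS => ?_
      rcases (hmem_col j v).1 hv with rfl | rfl | rfl
      · exact absurd hvS hA
      · rfl
      · exact absurd hvS hC
    · refine hsingleton j (vC k j) fun v hv hvS => ?_
      rcases (hmem_col j v).1 hv with rfl | rfl | rfl
      · exact absurd hvS hA
      · exact absurd hvS hB
      · rfl
    · refine hsingleton j (vA k j) fun v hv hvS => ?_
      rcases (hmem_col j v).1 hv with rfl | rfl | rfl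
      · rfl
      · exact absurd hvS hB
      · exact absurd hvS hC
  set σ : Fin k → Fin 3 := fun j =>
    if vA k j ∉ S then 2 else if vB k j ∉ S then 0 else 1 with hσ_def
  have f2 : ∀ j, σ j = 2 ↔ vA k j ∉ S := by
    intro j
    simp only [hσ_def]
    by_cases hA : vA k j ∈ S
    · rw [if_neg (not_not_intro hA)]
      constructor
      · intro h; split_ifs at h <;> exact absurd h (by decide)
      · intro h; exact absurd hA h
    · rw [if_pos hA]
      exact ⟨fun _ => hA, fun _ => rfl⟩
  have f0 : ∀ j, σ j = 0 ↔ (vA k j ∈ S ∧ vB k j ∉ S) := by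
    intro j
    simp only [hσ_def]
    by_cases hA : vA k j ∈ S
    · rw [if_neg (not_not_intro hA)]
      by_cases hB : vB k j ∈ S
      · rw [if_neg (not_not_intro hB)]
        exact ⟨fun h => absurd h (by decide), fun h => absurd hB h.2⟩
      · rw [if_pos hB]
        exact ⟨fun _ => ⟨hA, hB⟩, fun _ => rfl⟩
    · rw [if_pos hA]
      exact ⟨fun h => absurd h (by decide), fun h => absurd h.1 hA⟩
  have f1 : ∀ j, σ j = 1 ↔ (vA k j ∈ S ∧ vB k j ∈ S) := by
    intro j
    simp only [hσ_def]
    by_cases hA : vA k j ∈ S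
    · rw [if_neg (not_not_intro hA)]
      by_cases hB : vB k j ∈ S
      · rw [if_neg (not_not_intro hB)]
        exact ⟨fun _ => ⟨hA, hB⟩, fun _ => rfl⟩
      · rw [if_pos hB]
        exact ⟨fun h => absurd h (by decide), fun h => absurd h.2 hB⟩
    · rw [if_pos hA]
      exact ⟨fun h => absurd h (by decide), fun h => absurd h.1 hA⟩
  have hSeq : S = cell k σ := by
    apply Set.Subset.antisymm
    · intro v hv
      rcases hsub hv with (⟨j, rfl⟩ | ⟨j, rfl⟩) | ⟨j, rfl⟩
      · exact (vA_mem_cell_iff hk σ j).2 (fun h => (f2 j).1 h hv)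
      · exact (vB_mem_cell_iff hk σ j).2 (fun h => ((f0 j).1 h).2 hv)
      · refine (vC_mem_cell_iff hk σ j).2 (fun h => ?_)
        obtain ⟨hA, hB⟩ := (f1 j).1 h
        exact htriple j (by
          rw [Set.insert_subset_iff, Set.insert_subset_iff, Set.singleton_subset_iff]
          exact ⟨hA, hB, hv⟩)
    · rintro v ⟨i, rfl⟩
      cases i with
      | inl j =>
        show cellFst k σ j ∈ S
        unfold cellFst
        split_ifs with h2
        · have hA := (f2 j).1 h2
          rcases htwo j with ⟨hA', _⟩ | ⟨hA', _⟩ | ⟨hB', _⟩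
          exacts [absurd hA' hA, absurd hA' hA, hB']
        · by_contra hA
          exact h2 ((f2 j).2 hA)
      | inr j =>
        show cellSnd k σ j ∈ S
        unfold cellSnd
        split_ifs with h1
        · exact ((f1 j).1 h1).2
        · rcases fin3 (σ j) with h | h | h
          · obtain ⟨hA, hB⟩ := (f0 j).1 h
            rcases htwo j with ⟨_, hB'⟩ | ⟨_, hC'⟩ | ⟨hB', _⟩
            exacts [absurd hB' hB, hC', absurd hB' hB]
          · exact absurd h h1
          · have hA := (f2 j).1 h
            rcases htwo j with ⟨hA', _⟩ | ⟨hA', _⟩ | ⟨_, hC'⟩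
            exacts [absurd hA' hA, absurd hA' hA, hC']
  exact ⟨σ, fun h => hne (by rw [hSeq, h, cell_zero]), hSeq⟩


lemma goodSet_eq (hk : 2 ≤ k) :
    {S : Set (V k) | IsGood k S ∧ S ≠ setA k ∪ setB k ∧ S ≠ setB k ∪ setC k}
      = cell k '' {σ : Fin k → Fin 3 |
          σ ≠ (fun _ => 0) ∧ σ ≠ (fun _ => 1) ∧ σ ≠ (fun _ => 2)} := by
  ext S
  constructor
  · rintro ⟨hgood, hne1, hne2⟩
    obtain ⟨σ, hσ0, rfl⟩ := good_eq_cell hk hgood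
    refine ⟨σ, ⟨hσ0, ?_, ?_⟩, rfl⟩
    · intro h
      exact hne1 (by rw [h, cell_one])
    · intro h
      exact hne2 (by rw [h, cell_two])
  · rintro ⟨σ, ⟨hσ0, hσ1, hσ2⟩, rfl⟩
    refine ⟨isGood_cell hk σ hσ0, ?_, ?_⟩
    · intro h
      exact hσ1 (cell_inj hk (by rw [h, cell_one]))
    · intro h
      exact hσ2 (cell_inj hk (by rw [h, cell_two]))

lemma count_part (hk : 2 ≤ k) :
    {S : Set (V k) | IsGood k S ∧ S ≠ setA k ∪ setB k ∧ S ≠ setB k ∪ setC k}.ncard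
      = 3 ^ k - 3 := by
  classical
  rw [goodSet_eq hk, Set.ncard_image_of_injective _ (cell_inj hk)]
  have hT : {σ : Fin k → Fin 3 |
        σ ≠ (fun _ => 0) ∧ σ ≠ (fun _ => 1) ∧ σ ≠ (fun _ => 2)}
      = ↑(Finset.univ \ ({(fun _ => 0), (fun _ => 1), (fun _ => 2)} :
          Finset (Fin k → Fin 3))) := by
    ext σ
    simp only [Finset.coe_sdiff, Finset.coe_univ, Set.mem_diff, Set.mem_univ, true_and,
      Finset.coe_insert, Set.mem_insert_iff, Finset.coe_singleton, Set.mem_singleton_iff,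
      Set.mem_setOf_eq]
    tauto
  rw [hT, Set.ncard_coe_finset, Finset.card_sdiff_of_subset (Finset.subset_univ _), Finset.card_univ,
    Fintype.card_fun, Fintype.card_fin, Fintype.card_fin]
  have j0 : Fin k := ⟨0, by omega⟩
  have hd01 : (fun _ : Fin k => (0:Fin 3)) ≠ (fun _ => (1:Fin 3)) := by
    intro h
    exact absurd (congrFun h j0) (by decide)
  have hd02 : (fun _ : Fin k => (0:Fin 3)) ≠ (fun _ => (2:Fin 3)) := by
    intro h
    exact absurd (congrFun h j0) (by decide)
  have hd12 : (fun _ : Fin k => (1:Fin 3)) ≠ (fun _ => (2:Fin 3)) := by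
    intro h
    exact absurd (congrFun h j0) (by decide)
  rw [Finset.card_insert_of_notMem (by simp [hd01, hd02]),
    Finset.card_insert_of_notMem (by simp [hd12]), Finset.card_singleton]

lemma main_eq (hk : 2 ≤ k) :
    OmegaB k =
      ⋃ S ∈ {S : Set (V k) | IsGood k S ∧ S ≠ setA k ∪ setB k ∧ S ≠ setB k ∪ setC k},
        convexHull ℝ S := by
  apply Set.Subset.antisymm
  · -- OmegaB ⊆ union
    have hclosed : IsClosed (⋃ S ∈ {S : Set (V k) |
        IsGood k S ∧ S ≠ setA k ∪ setB k ∧ S ≠ setB k ∪ setC k}, convexHull ℝ S) := by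
      apply Set.Finite.isClosed_biUnion
      · rw [goodSet_eq hk]
        exact Set.Finite.image _ (Set.toFinite _)
      · intro S hS
        obtain ⟨hgood, _, _⟩ := hS
        have hfin : S.Finite :=
          (((Set.finite_range _).union (Set.finite_range _)).union
            (Set.finite_range _)).subset hgood.1
        exact hfin.isClosed_convexHull (𝕜 := ℝ)
    apply closure_minimal _ hclosed
    rintro x ⟨hx0, hx12⟩
    obtain ⟨σ, hσ0, hmem⟩ := covering hk hx0
    have hσ1 : σ ≠ (fun _ => 1) := by
      rintro rfl
      rw [cell_one] at hmem
      exact hx12 (Or.inl hmem)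
    have hσ2 : σ ≠ (fun _ => 2) := by
      rintro rfl
      rw [cell_two] at hmem
      exact hx12 (Or.inr hmem)
    refine Set.mem_biUnion ?_ hmem
    refine ⟨isGood_cell hk σ hσ0, ?_, ?_⟩
    · intro h
      exact hσ1 (cell_inj hk (by rw [h, cell_one]))
    · intro h
      exact hσ2 (cell_inj hk (by rw [h, cell_two]))
  · apply Set.iUnion₂_subset
    rintro S ⟨hgood, hne1, hne2⟩
    obtain ⟨σ, hσ0, rfl⟩ := good_eq_cell hk hgood
    have hσ1 : σ ≠ (fun _ => 1) := fun h => hne1 (by rw [h, cell_one])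
    have hσ2 : σ ≠ (fun _ => 2) := fun h => hne2 (by rw [h, cell_two])
    exact cell_subset_closure hk σ hσ0 hσ1 hσ2

end Stmt11

/-- `Ω = closure(Δ₀ \ (Δ₁ ∪ Δ₂))` is the union of the good simplices other than
`Δ₁ = ⟨A ∪ B⟩` and `Δ₂ = ⟨B ∪ C⟩`; there are `3^k − 3` of them. -/
theorem stmt_11 (k : ℕ) (hk : 2 ≤ k) :
    (OmegaB k =
      ⋃ S ∈ {S : Set (V k) | IsGood k S ∧ S ≠ setA k ∪ setB k ∧ S ≠ setB k ∪ setC k},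
        convexHull ℝ S) ∧
    {S : Set (V k) | IsGood k S ∧ S ≠ setA k ∪ setB k ∧ S ≠ setB k ∪ setC k}.ncard
      = 3 ^ k - 3 :=
  ⟨Stmt11.main_eq hk, Stmt11.count_part hk⟩
end
end

section
/- The points v₁*, …, v_m* are affinely independent; their convex hull Δ_S = convexHull{v₁*, …, v_m*} is contained in Δ = convexHull{v₁, …, v_m}; each v_i* lies on the half-open segment from β_S to v_i (excluding β_S, including v_i); and v_i* = v_i if and only if S_i = 1. In particular the separator [Δ, S] = closure(Δ \ Δ_S) is well defined. -/
noncomputable section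

/-- `β_S = (Σ S_i v_i)/(Σ S_i)`. -/
def betaPt {N m : ℕ} (v : Fin m → (Fin N → ℝ)) (w : Fin m → ℝ) : Fin N → ℝ :=
  (∑ i, w i)⁻¹ • ∑ i, w i • v i

/-- `v_i* = S_i v_i + (1 − S_i) β_S`. -/
def vstar {N m : ℕ} (v : Fin m → (Fin N → ℝ)) (w : Fin m → ℝ) (i : Fin m) :
    Fin N → ℝ :=
  w i • v i + (1 - w i) • betaPt v w

/-- The points `v₁*, …, v_m*` are affinely independent; their convex hull `Δ_S` is
contained in `Δ`; each `v_i*` lies on the half-open segment from `β_S` to `v_i`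
(excluding `β_S`, including `v_i`); and `v_i* = v_i` iff `S_i = 1`.  In particular the
separator `[Δ, S] = closure(Δ \ Δ_S)` is well defined. -/
theorem stmt_13 (N m : ℕ) (hN : 1 ≤ N) (hm : 2 ≤ m)
    (v : Fin m → (Fin N → ℝ)) (hv : AffineIndependent ℝ v)
    (S : Fin m → ℝ) (hS : ∀ i, S i ∈ Set.Ioc (0 : ℝ) 1) :
    AffineIndependent ℝ (vstar v S) ∧
    convexHull ℝ (Set.range (vstar v S)) ⊆ convexHull ℝ (Set.range v) ∧
    (∀ i, ∃ t : ℝ, 0 < t ∧ t ≤ 1 ∧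
      vstar v S i = (1 - t) • betaPt v S + t • v i) ∧
    (∀ i, vstar v S i = v i ↔ S i = 1) := by
  have hW : 0 < ∑ i, S i :=
    Finset.sum_pos (fun i _ => (hS i).1) ⟨⟨0, by omega⟩, Finset.mem_univ _⟩
  have hWne : (∑ i, S i) ≠ 0 := ne_of_gt hW
  have hSne : ∀ j, S j ≠ 0 := fun j => ne_of_gt (hS j).1
  have hbeta : betaPt v S = ∑ i, ((∑ j, S j)⁻¹ * S i) • v i := by
    simp [betaPt, Finset.smul_sum, smul_smul]
  have hbeta_mem : betaPt v S ∈ convexHull ℝ (Set.range v) := by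
    rw [hbeta]
    refine (convex_convexHull ℝ _).sum_mem
      (fun i _ => mul_nonneg (inv_nonneg.2 hW.le) (hS i).1.le) ?_
      (fun i _ => subset_convexHull ℝ _ ⟨i, rfl⟩)
    rw [← Finset.mul_sum, inv_mul_cancel₀ hWne]
  -- β ≠ v i
  have hbne : ∀ i, betaPt v S ≠ v i := by
    intro i heq
    have key := affineIndependent_iff.mp hv Finset.univ
      (fun j => (∑ k, S k)⁻¹ * S j - if j = i then 1 else 0) ?_ ?_
    · haveI : Nontrivial (Fin m) := Fin.nontrivial_iff_two_le.mpr hm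
      obtain ⟨j, hj⟩ := exists_ne i
      have := key j (Finset.mem_univ j)
      simp only [if_neg hj, sub_zero] at this
      exact (mul_ne_zero (inv_ne_zero hWne) (hSne j)) this
    · simp only [Finset.sum_sub_distrib, ← Finset.mul_sum,
        inv_mul_cancel₀ hWne, Finset.sum_ite_eq', Finset.mem_univ, if_true, sub_self]
    · simp only [sub_smul, Finset.sum_sub_distrib, ← hbeta]
      rw [heq]
      rw [show ∑ j, (if j = i then (1:ℝ) else 0) • v j = v i by
        simp [ite_smul]]
      exact sub_self _
  refine ⟨?_, ?_, ?_, ?_⟩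
  · -- affine independence of vstar
    rw [affineIndependent_iff]
    intro s c hc0 hcv
    -- reduce to the univ case via indicator
    intro e he
    set c' : Fin m → ℝ := fun j => if j ∈ s then c j else 0 with hc'
    have hc'0 : ∑ j, c' j = 0 := by
      rw [Finset.sum_ite_mem, Finset.univ_inter]; exact hc0
    have hc'v : ∑ j, c' j • vstar v S j = 0 := by
      rw [show ∑ j, c' j • vstar v S j = ∑ j ∈ s, c j • vstar v S j from by
        rw [← Finset.sum_subset (Finset.subset_univ s)
          (fun x _ hx => by simp [hc', hx])]
        exact Finset.sum_congr rfl fun j hj => by simp [hc', hj]]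
      exact hcv
    set W := ∑ k, S k with hWdef
    set D := ∑ j, c' j * S j with hD
    have expand : ∑ j, c' j • vstar v S j
        = ∑ j, (c' j * S j) • v j + (∑ j, (c' j * (1 - S j))) • betaPt v S := by
      simp only [vstar, smul_add, smul_smul, Finset.sum_add_distrib, Finset.sum_smul]
    have hc1 : ∑ j, c' j * (1 - S j) = -D := by
      simp only [mul_sub, mul_one, Finset.sum_sub_distrib, hc'0, zero_sub, hD]
    have hDbeta : D • betaPt v S = ∑ j, (D * (W⁻¹ * S j)) • v j := by
      rw [hbeta, Finset.smul_sum]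
      simp only [smul_smul, hWdef]
    have hsum2 : ∑ j, (c' j * S j - D * (W⁻¹ * S j)) • v j = 0 := by
      simp only [sub_smul, Finset.sum_sub_distrib, ← hDbeta]
      have h := hc'v
      rw [expand, hc1, neg_smul] at h
      rw [sub_eq_zero, eq_comm, ← neg_add_eq_zero] at *
      linear_combination (norm := abel) h
    have key := affineIndependent_iff.mp hv Finset.univ _ ?_ hsum2
    · have hconst : ∀ j, c' j = D * W⁻¹ := by
        intro j
        have h := key j (Finset.mem_univ j)
        have h2 : c' j * S j = D * W⁻¹ * S j := by
          rw [sub_eq_zero] at h; rw [h, mul_assoc]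
        exact mul_right_cancel₀ (hSne j) h2
      have hm0 : (m : ℝ) * (D * W⁻¹) = 0 := by
        have : ∑ j, c' j = (m : ℝ) * (D * W⁻¹) := by
          simp [hconst, Finset.sum_const, Finset.card_univ, nsmul_eq_mul]
        rw [← this, hc'0]
      have hmne : (m : ℝ) ≠ 0 := by positivity
      have hK : D * W⁻¹ = 0 := by
        rcases mul_eq_zero.mp hm0 with h | h
        · exact absurd h hmne
        · exact h
      have : c' e = 0 := by rw [hconst e, hK]
      simpa [hc', he] using this
    · simp only [Finset.sum_sub_distrib, ← Finset.mul_sum, ← hD,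
        inv_mul_cancel₀ hWne, mul_one, sub_self]
      rw [← hWdef, inv_mul_cancel₀ hWne, mul_one, sub_self]
  · -- convex hull inclusion
    refine convexHull_min ?_ (convex_convexHull ℝ _)
    rintro _ ⟨i, rfl⟩
    have h1 : v i ∈ convexHull ℝ (Set.range v) := subset_convexHull ℝ _ ⟨i, rfl⟩
    have h2 : (0:ℝ) ≤ 1 - S i := by linarith [(hS i).2]
    have h3 : S i + (1 - S i) = 1 := by ring
    exact (convex_convexHull ℝ (Set.range v)) h1 hbeta_mem (hS i).1.le h2 h3
  · intro i
    exact ⟨S i, (hS i).1, (hS i).2, by rw [vstar]; exact add_comm _ _⟩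
  · intro i
    constructor
    · intro heq
      have h1 : (1 - S i) • betaPt v S = v i - S i • v i :=
        eq_sub_of_add_eq' heq
      have h0 : (1 - S i) • (betaPt v S - v i) = 0 := by
        rw [smul_sub, h1, sub_smul, one_smul, sub_self]
      rcases smul_eq_zero.mp h0 with h | h
      · linarith [sub_eq_zero.mp (by linarith : (1:ℝ) - S i = 0)]
      · exact absurd (sub_eq_zero.mp h) (hbne i)
    · intro h
      simp [vstar, h]
end
end

section
/- Suppose (S_m) is a sequence of weight functions S_m : {1, …, m₂} → (0, 1] such that S_m(i) → S'(i) ∈ (0, 1] as m → ∞ for each i ≤ m₁, and S_m(i) → 0 for each i > m₁. Then β_{S_m} → β'_{S'}; v_i*(S_m) → v_i*(S') for every i ≤ m₁; and v_i*(S_m) → β'_{S'} for every i > m₁. That is, the weighted simplex Δ_{S_m} converges barycentrically to Δ'_{S'}: its first m₁ vertices converge to the vertices of Δ'_{S'} and its remaining vertices converge to the barycenter of Δ'_{S'}. -/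
noncomputable section

open Filter Topology

lemma sum_restrict {m₁ m₂ : ℕ} (h : m₁ ≤ m₂) {M : Type*} [AddCommMonoid M]
    (g : Fin m₂ → M) (hg : ∀ i : Fin m₂, m₁ ≤ (i : ℕ) → g i = 0) :
    ∑ i, g i = ∑ j : Fin m₁, g (Fin.castLE h j) := by
  classical
  rw [← Finset.sum_subset (Finset.filter_subset (fun i : Fin m₂ => (i : ℕ) < m₁) Finset.univ)
      (by intro x _ hx; exact hg x (le_of_not_gt (by simpa using hx)))]
  have himg : Finset.univ.filter (fun i : Fin m₂ => (i : ℕ) < m₁)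
      = Finset.univ.image (Fin.castLE h) := by
    ext i
    simp only [Finset.mem_filter, Finset.mem_univ, true_and, Finset.mem_image]
    constructor
    · intro hi; exact ⟨⟨i, hi⟩, by ext; simp⟩
    · rintro ⟨a, rfl⟩; exact a.2
  rw [himg, Finset.sum_image (fun a _ b _ hab => Fin.castLE_injective h hab)]

/-- If the weights `S_m(i)` converge to `S'(i) ∈ (0,1]` for `i ≤ m₁` and to `0` for
`i > m₁`, then the weighted simplex `Δ_{S_m}` converges barycentrically to `Δ'_{S'}`:
`β_{S_m} → β'_{S'}`, the first `m₁` starred vertices converge to the starred vertices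
of the face, and the remaining starred vertices converge to `β'_{S'}`. -/
theorem stmt_15 (N m₁ m₂ : ℕ) (hN : 1 ≤ N) (hm₁ : 2 ≤ m₁) (hlt : m₁ < m₂)
    (v : Fin m₂ → (Fin N → ℝ)) (hv : AffineIndependent ℝ v)
    (S : ℕ → Fin m₂ → ℝ) (hS : ∀ m i, S m i ∈ Set.Ioc (0 : ℝ) 1)
    (S' : Fin m₁ → ℝ) (hS' : ∀ i, S' i ∈ Set.Ioc (0 : ℝ) 1)
    (hpos : ∀ i : Fin m₁,
      Tendsto (fun m => S m (Fin.castLE hlt.le i)) atTop (nhds (S' i)))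
    (hzero : ∀ i : Fin m₂, m₁ ≤ (i : ℕ) →
      Tendsto (fun m => S m i) atTop (nhds 0)) :
    Tendsto (fun m => betaPt v (S m)) atTop
        (nhds (betaPt (fun i : Fin m₁ => v (Fin.castLE hlt.le i)) S')) ∧
    (∀ i : Fin m₁,
      Tendsto (fun m => vstar v (S m) (Fin.castLE hlt.le i)) atTop
        (nhds (vstar (fun i : Fin m₁ => v (Fin.castLE hlt.le i)) S' i))) ∧
    (∀ i : Fin m₂, m₁ ≤ (i : ℕ) →
      Tendsto (fun m => vstar v (S m) i) atTop
        (nhds (betaPt (fun i : Fin m₁ => v (Fin.castLE hlt.le i)) S'))) := by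
  classical
  set L : Fin m₂ → ℝ := fun i => if h : (i : ℕ) < m₁ then S' ⟨i, h⟩ else 0 with hLdef
  have hL : ∀ i, Tendsto (fun m => S m i) atTop (nhds (L i)) := by
    intro i
    by_cases h : (i : ℕ) < m₁
    · have := hpos ⟨i, h⟩
      simp only [hLdef, dif_pos h]
      simpa using this
    · simp only [hLdef, dif_neg h]
      exact hzero i (le_of_not_gt h)
  have hLzero : ∀ i : Fin m₂, m₁ ≤ (i : ℕ) → L i = 0 := fun i hi => by
    simp [hLdef, Nat.not_lt.mpr hi]
  have hLcast : ∀ j : Fin m₁, L (Fin.castLE hlt.le j) = S' j := by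
    intro j
    simp [hLdef, j.2]
  have hsumL : ∑ i, L i = ∑ j, S' j := by
    rw [sum_restrict hlt.le L hLzero]
    exact Finset.sum_congr rfl fun j _ => hLcast j
  have hsumpos : 0 < ∑ j, S' j := by
    have : Nonempty (Fin m₁) := ⟨⟨0, by omega⟩⟩
    exact Finset.sum_pos (fun i _ => (hS' i).1) Finset.univ_nonempty
  have hvecL : ∑ i, L i • v i = ∑ j : Fin m₁, S' j • v (Fin.castLE hlt.le j) := by
    rw [sum_restrict hlt.le _ (fun i hi => by rw [hLzero i hi, zero_smul])]
    exact Finset.sum_congr rfl fun j _ => by rw [hLcast j]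
  have hsum : Tendsto (fun m => ∑ i, S m i) atTop (nhds (∑ i, L i)) :=
    tendsto_finset_sum _ fun i _ => hL i
  have hvec : Tendsto (fun m => ∑ i, S m i • v i) atTop (nhds (∑ i, L i • v i)) :=
    tendsto_finset_sum _ fun i _ => (hL i).smul_const (v i)
  have hbeta : Tendsto (fun m => betaPt v (S m)) atTop
      (nhds (betaPt (fun i : Fin m₁ => v (Fin.castLE hlt.le i)) S')) := by
    have hne : (∑ i, L i) ≠ 0 := by rw [hsumL]; exact hsumpos.ne'
    have := (hsum.inv₀ hne).smul hvec
    unfold betaPt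
    rw [← hsumL, ← hvecL]
    exact this
  refine ⟨hbeta, ?_, ?_⟩
  · intro i
    have h1 : Tendsto (fun m => S m (Fin.castLE hlt.le i)) atTop (nhds (S' i)) := hpos i
    have := (h1.smul_const (v (Fin.castLE hlt.le i))).add
      (((tendsto_const_nhds (x := (1:ℝ))).sub h1).smul hbeta)
    unfold vstar
    exact this
  · intro i hi
    have h1 : Tendsto (fun m => S m i) atTop (nhds 0) := hzero i hi
    have := (h1.smul_const (v i)).add (((tendsto_const_nhds (x := (1:ℝ))).sub h1).smul hbeta)
    unfold vstar
    simpa using this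
end
end

section
/- Let A = [[a, b], [c, d]] and A' = [[a', b'], [c', d']] be matrices with integer entries, determinant 1, |a + d| > 2, and |a' + d'| > 2. If some real number x satisfies both c·x² + (d − a)·x − b = 0 and c'·x² + (d' − a')·x − b' = 0, then the two quadratics have exactly the same real roots: every real y with c·y² + (d − a)·y − b = 0 also satisfies c'·y² + (d' − a')·y − b' = 0, and conversely. (This is the concrete content of Lemma 3.2(2): two hyperbolic elements of the modular group whose axes share one endpoint on the circle at infinity must share both endpoints, so two distinct geodesics of a modular pattern cannot share an endpoint.) -/
/-- A hyperbolic fixed-point quadratic has no rational root. -/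
lemma aux_no_rat_root (a b c d : ℤ) (hdet : a * d - b * c = 1) (htr : 2 < |a + d|)
    (q : ℚ) : (c : ℚ) * q ^ 2 + ((d : ℚ) - (a : ℚ)) * q - (b : ℚ) ≠ 0 := by
  intro h
  have hdetQ : (a : ℚ) * d - b * c = 1 := by exact_mod_cast hdet
  set r : ℚ := 2 * c * q + ((d : ℚ) - a) with hr
  have hr2 : r ^ 2 = (((a + d) ^ 2 - 4 : ℤ) : ℚ) := by
    push_cast
    linear_combination (4 * (c : ℚ)) * h - 4 * hdetQ
  -- r has denominator 1
  have hden : r.den = 1 := by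
    have h1 : (r ^ 2).den = 1 := by rw [hr2]; exact Rat.den_intCast _
    have h2 : r.den ^ 2 = 1 := by rw [← Rat.den_pow]; exact h1
    nlinarith [r.pos]
  have hrnum : (r.num : ℚ) = r := by
    rw [← Rat.den_eq_one_iff]; exact hden
  set p : ℤ := r.num with hp
  have hpz : p ^ 2 = (a + d) ^ 2 - 4 := by
    have : ((p ^ 2 : ℤ) : ℚ) = (((a + d) ^ 2 - 4 : ℤ) : ℚ) := by
      push_cast
      rw [show ((p : ℚ)) ^ 2 = r ^ 2 by rw [hrnum], hr2]
      push_cast; ring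
    exact_mod_cast this
  -- (a+d)^2 - 4 cannot be a perfect square when |a+d| > 2
  set t : ℤ := a + d with ht
  have h1 : |p| < |t| := by
    nlinarith [sq_abs p, sq_abs t, abs_nonneg p, abs_nonneg t]
  have h2 : |p| + 1 ≤ |t| := h1
  nlinarith [sq_abs p, sq_abs t, abs_nonneg p, abs_nonneg t]

/-- Hyperbolicity forces the lower-left entry to be nonzero. -/
lemma aux_c_ne_zero (a b c d : ℤ) (hdet : a * d - b * c = 1) (htr : 2 < |a + d|) :
    c ≠ 0 := by
  intro h
  subst h
  have had : a * d = 1 := by linarith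
  rcases (Int.mul_eq_one_iff_eq_one_or_neg_one).mp had with ⟨ha, hd⟩ | ⟨ha, hd⟩ <;>
    subst ha <;> subst hd <;> simp at htr

/-- Let `A = [[a, b], [c, d]]` and `A' = [[a', b'], [c', d']]` be integer matrices of
determinant 1 with `|a + d| > 2` and `|a' + d'| > 2`.  If the fixed-point quadratics
`c·x² + (d − a)·x − b` and `c'·x² + (d' − a')·x − b'` share a real root, then they have
exactly the same real roots: two hyperbolic elements of the modular group whose axes
share one endpoint at infinity share both endpoints. -/
theorem stmt_19 (a b c d a' b' c' d' : ℤ)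
    (hdet : a * d - b * c = 1) (hdet' : a' * d' - b' * c' = 1)
    (htr : 2 < |a + d|) (htr' : 2 < |a' + d'|)
    (x : ℝ)
    (hx : (c : ℝ) * x ^ 2 + ((d : ℝ) - (a : ℝ)) * x - (b : ℝ) = 0)
    (hx' : (c' : ℝ) * x ^ 2 + ((d' : ℝ) - (a' : ℝ)) * x - (b' : ℝ) = 0) :
    ∀ y : ℝ,
      (c : ℝ) * y ^ 2 + ((d : ℝ) - (a : ℝ)) * y - (b : ℝ) = 0 ↔
      (c' : ℝ) * y ^ 2 + ((d' : ℝ) - (a' : ℝ)) * y - (b' : ℝ) = 0 := by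
  have hc : c ≠ 0 := aux_c_ne_zero a b c d hdet htr
  have hc' : c' ≠ 0 := aux_c_ne_zero a' b' c' d' hdet' htr'
  set α : ℤ := c' * (d - a) - c * (d' - a') with hα
  set β : ℤ := c' * b - c * b' with hβ
  have hlin : (α : ℝ) * x = (β : ℝ) := by
    simp only [hα, hβ]; push_cast
    linear_combination (c' : ℝ) * hx - (c : ℝ) * hx'
  have hα0 : α = 0 := by
    by_contra hα0
    have hαR : (α : ℝ) ≠ 0 := Int.cast_ne_zero.mpr hα0
    set q : ℚ := (β : ℚ) / (α : ℚ) with hq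
    have hxq : x = (q : ℝ) := by
      rw [hq]; push_cast
      field_simp
      linarith [hlin]
    apply aux_no_rat_root a b c d hdet htr q
    have : (c : ℝ) * (q : ℝ) ^ 2 + ((d : ℝ) - (a : ℝ)) * (q : ℝ) - (b : ℝ) = 0 := by
      rw [← hxq]; exact hx
    exact_mod_cast this
  have hβ0 : β = 0 := by
    have : (β : ℝ) = 0 := by rw [← hlin, hα0]; simp
    exact_mod_cast this
  have hαR : (c' : ℝ) * ((d : ℝ) - a) = (c : ℝ) * ((d' : ℝ) - a') := by
    have : (α : ℝ) = 0 := by exact_mod_cast hα0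
    rw [hα] at this; push_cast at this
    linarith
  have hβR : (c' : ℝ) * b = (c : ℝ) * b' := by
    have : (β : ℝ) = 0 := by exact_mod_cast hβ0
    rw [hβ] at this; push_cast at this
    linarith
  intro y
  have hcR : (c : ℝ) ≠ 0 := Int.cast_ne_zero.mpr hc
  have hcR' : (c' : ℝ) ≠ 0 := Int.cast_ne_zero.mpr hc'
  have key : (c' : ℝ) * ((c : ℝ) * y ^ 2 + ((d : ℝ) - a) * y - b)
      = (c : ℝ) * ((c' : ℝ) * y ^ 2 + ((d' : ℝ) - a') * y - b') := by
    linear_combination y * hαR - hβR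
  constructor
  · intro h
    have : (c : ℝ) * ((c' : ℝ) * y ^ 2 + ((d' : ℝ) - a') * y - b') = 0 := by
      rw [← key, h, mul_zero]
    exact (mul_eq_zero.mp this).resolve_left hcR
  · intro h
    have : (c' : ℝ) * ((c : ℝ) * y ^ 2 + ((d : ℝ) - a) * y - b) = 0 := by
      rw [key, h, mul_zero]
    exact (mul_eq_zero.mp this).resolve_left hcR'
end
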